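/- CLA1 proves the formula ⊓x⊓y(x=y ⊔ x≠y); that is, the decidability of equality of natural numbers is provable in the computability-logic-based arithmetic CLA1. -/

import Mathlib

namespace CoL

attribute [local instance 10] Classical.propDecidable

noncomputable section

/-! ## Players, moves, runs -/

/-- The two players: the machine `⊤` and the environment `⊥`. -/
inductive Player where
  | top
  | bot
deriving DecidableEq, Inhabited

/-- The adversary of a player. -/
def Player.opp : Player → Player
  | .top => .bot
  | .bot => .top

/-- Moves, with enough structure for choice/parallel/dfb-style prefixed moves. -/
inductive Move where
  | choice : ℕ → Move
  | par : Bool → Move → Move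
  | succd : Move → Move
  | ante : List Bool → Move → Move
  | repl : List Bool → Move
deriving DecidableEq, Inhabited

/-- A labeled move: a move together with the player who made it. -/
structure Labmove where
  player : Player
  move : Move
deriving DecidableEq, Inhabited

/-- A run: a finite or infinite sequence of labeled moves.  A position is a finite run,
represented by a `List Labmove`. -/
inductive RunT where
  | fin : List Labmove → RunT
  | inf : (ℕ → Labmove) → RunT

namespace RunT

def get : RunT → ℕ → Option Labmove
  | .fin l, n => l[n]?
  | .inf f, n => some (f n)

def take : RunT → ℕ → List Labmove
  | .fin l, n => l.take n
  | .inf f, n => (List.range n).map f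

def hasPrefix (Γ : RunT) (Φ : List Labmove) : Prop := Γ.take Φ.length = Φ

end RunT

/-- Switch the label of a labmove to the adversary's. -/
def Labmove.flip (lm : Labmove) : Labmove := ⟨lm.player.opp, lm.move⟩

def RunT.flip : RunT → RunT
  | .fin l => .fin (l.map Labmove.flip)
  | .inf f => .inf fun n => (f n).flip

theorem not_infinite_bound {P : ℕ → Prop} (h : ¬ (setOf P).Infinite) :
    ∃ N : ℕ, ∀ n, P n → n < N := by
  rw [Set.not_infinite] at h
  obtain ⟨N, hN⟩ := h.bddAbove
  exact ⟨N + 1, fun n hn => Nat.lt_succ_of_le (hN hn)⟩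

/-- The subsequence of a run obtained by a partial relabeling function, with the
surviving moves reindexed consecutively (in the original order). -/
def RunT.fmap (g : Labmove → Option Labmove) : RunT → RunT
  | .fin l => .fin (l.filterMap g)
  | .inf f =>
    if h : {n | (g (f n)).isSome = true}.Infinite then
      .inf fun k => (g (f (Nat.nth (fun n => (g (f n)).isSome = true) k))).getD default
    else
      .fin ((List.range (not_infinite_bound h).choose).filterMap fun n => g (f n))

/-- A run contains only finitely many labmoves satisfying `P`. -/
def RunT.finMany (P : Labmove → Prop) : RunT → Prop
  | .fin _ => True
  | .inf f => {n | P (f n)}.Finite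

/-- The position (index) of the `k`-th (0-based) natural number satisfying `P`,
if it exists. -/
def kthIdx (P : ℕ → Prop) (k : ℕ) : Option ℕ :=
  if h : ∃ n, P n ∧ {m | m < n ∧ P m}.ncard = k then some (Nat.find h) else none

/-! ## Constant games -/

/-- A constant game: a set of legal (finite) positions together with a winner
function on runs.  (Legality of arbitrary runs is derived: a run is legal iff all its
finite initial segments are legal positions.) -/
structure ConstGame where
  legalPos : List Labmove → Prop
  wn : RunT → Player

namespace ConstGame

/-- A run is legal iff every finite initial segment of it is a legal position. -/
def legal (A : ConstGame) (Γ : RunT) : Prop := ∀ n, A.legalPos (Γ.take n)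

/-- A run is `p`-illegal iff the last move of its shortest illegal initial segment is
`p`-labeled. -/
def illegalFor (A : ConstGame) (p : Player) (Γ : RunT) : Prop :=
  ∃ (Φ : List Labmove) (lm : Labmove),
    Γ.hasPrefix (Φ ++ [lm]) ∧ A.legalPos Φ ∧ ¬ A.legalPos (Φ ++ [lm]) ∧ lm.player = p

/-- A run is won by `p` iff it is illegal with the adversary the offender, or it is a
legal run whose winner is `p`. -/
def wonBy (A : ConstGame) (p : Player) (Γ : RunT) : Prop :=
  A.illegalFor p.opp Γ ∨ (A.legal Γ ∧ A.wn Γ = p)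

end ConstGame

/-- The `n`-th entry of the run exists and is `q`-labeled. -/
def RunT.playerAt (Γ : RunT) (q : Player) (n : ℕ) : Prop :=
  ∃ lm, Γ.get n = some lm ∧ lm.player = q

/-- Index of the `k`-th `q`-labeled move of a run. -/
def RunT.kthPlayerIdx (Γ : RunT) (q : Player) (k : ℕ) : Option ℕ := kthIdx (Γ.playerAt q) k

/-- The `k`-th `q`-labeled move of a run. -/
def RunT.kthPlayerMove (Γ : RunT) (q : Player) (k : ℕ) : Option Move :=
  (Γ.kthPlayerIdx q k).bind fun n => (Γ.get n).map Labmove.move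

/-- `Δ` is a `p`-delay of `Γ`: both players' subsequences of moves agree, and whenever
the `k`-th `p`-labeled move occurs later than the `n`-th `¬p`-labeled move in `Γ`,
so does it in `Δ`. -/
def IsDelay (p : Player) (Γ Δ : RunT) : Prop :=
  (∀ (q : Player) (k : ℕ), Γ.kthPlayerMove q k = Δ.kthPlayerMove q k) ∧
  (∀ (k n a b c d : ℕ),
    Γ.kthPlayerIdx p k = some a → Γ.kthPlayerIdx p.opp n = some b →
    Δ.kthPlayerIdx p k = some c → Δ.kthPlayerIdx p.opp n = some d →
    b < a → d < c)

/-- A constant game is static. -/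
def ConstGame.Static (A : ConstGame) : Prop :=
  ∀ (p : Player) (Γ Δ : RunT), IsDelay p Γ Δ →
    (¬ A.illegalFor p Γ → ¬ A.illegalFor p Δ) ∧ (A.wonBy p Γ → A.wonBy p Δ)

/-- Valuations: assignments of constants (natural numbers) to variables. -/
abbrev Valuation := ℕ → ℕ

/-- A game: a function from valuations to constant games. -/
abbrev Game := Valuation → ConstGame

/-- A game is static iff all of its instances are. -/
def Game.Static (A : Game) : Prop := ∀ e, (A e).Static

/-! ## Machines: EPMs and BMEPMs -/

/-- An action of an EPM at a step: make a (single) move, grant permission, or keep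
computing. -/
inductive EAct where
  | move : Move → EAct
  | permit
  | think

/-- An easy-play machine, abstracted as a deterministic interactive algorithm: its
action is a function of the valuation, the current position (run-tape content), and the
clock cycle. -/
structure EPM where
  act : Valuation → List Labmove → ℕ → EAct

/-- The position after `t` steps of a play of EPM `M` on valuation `e`, where `env t`
is the environment's (optional, single) response upon a permission granted at step
`t`. -/
def EPM.pos (M : EPM) (e : Valuation) (env : ℕ → Option Move) : ℕ → List Labmove
  | 0 => []
  | t + 1 =>
    match M.act e (M.pos e env t) t with
    | .move m => M.pos e env t ++ [⟨.top, m⟩]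
    | .permit => M.pos e env t ++ (env t).toList.map fun m => ⟨.bot, m⟩
    | .think => M.pos e env t

def spelledGet (pos : ℕ → List Labmove) (n : ℕ) : Option Labmove :=
  if h : ∃ t, n < (pos t).length then (pos (Nat.find h))[n]? else none

/-- The run incrementally spelled by a monotone sequence of positions. -/
def spelled (pos : ℕ → List Labmove) : RunT :=
  if h : ∃ t, ∀ s, (pos s).length ≤ (pos t).length then .fin (pos (Nat.find h))
  else .inf fun n => (spelledGet pos n).getD default

/-- A computation branch is fair iff permission is granted infinitely many times. -/
def EPM.Fair (M : EPM) (e : Valuation) (env : ℕ → Option Move) : Prop :=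
  ∀ N, ∃ t, N ≤ t ∧ M.act e (M.pos e env t) t = .permit

/-- `M ⊨ₑ A`: machine `M` wins game `A` on valuation `e`. -/
def EPM.WinsOn (M : EPM) (A : Game) (e : Valuation) : Prop :=
  ∀ env : ℕ → Option Move,
    ¬ (A e).illegalFor .bot (spelled (M.pos e env)) →
      M.Fair e env ∧ (A e).wonBy .top (spelled (M.pos e env))

/-- `M ⊨ A`: `M` wins `A` on every valuation. -/
def EPM.Wins (M : EPM) (A : Game) : Prop := ∀ e, M.WinsOn A e

/-- An action of a block-move EPM: make a finite block of moves, grant permission, or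
keep computing. -/
inductive BAct where
  | moves : List Move → BAct
  | permit
  | think

/-- A block-move EPM: like an EPM, but either player may make a finite block of moves
at a time. -/
structure BMEPM where
  act : Valuation → List Labmove → ℕ → BAct

def BMEPM.pos (M : BMEPM) (e : Valuation) (env : ℕ → List Move) : ℕ → List Labmove
  | 0 => []
  | t + 1 =>
    match M.act e (M.pos e env t) t with
    | .moves ms => M.pos e env t ++ ms.map fun m => ⟨.top, m⟩
    | .permit => M.pos e env t ++ (env t).map fun m => ⟨.bot, m⟩
    | .think => M.pos e env t

def BMEPM.Fair (M : BMEPM) (e : Valuation) (env : ℕ → List Move) : Prop :=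
  ∀ N, ∃ t, N ≤ t ∧ M.act e (M.pos e env t) t = .permit

/-- `M ⊨ₑ A` for a BMEPM. -/
def BMEPM.WinsOn (M : BMEPM) (A : Game) (e : Valuation) : Prop :=
  ∀ env : ℕ → List Move,
    ¬ (A e).illegalFor .bot (spelled (M.pos e env)) →
      M.Fair e env ∧ (A e).wonBy .top (spelled (M.pos e env))

def BMEPM.Wins (M : BMEPM) (A : Game) : Prop := ∀ e, M.WinsOn A e

/-- A game is computable iff some EPM wins it. -/
def Game.Computable (A : Game) : Prop := ∃ M : EPM, M.Wins A

/-! ## Game operations -/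

/-- The elementary game with no nonempty legal runs, won by `⊤` iff `P` holds. -/
def elemGame (P : Prop) : ConstGame where
  legalPos Φ := Φ = []
  wn _ := if P then .top else .bot

/-- Negation: the roles of the two players are interchanged. -/
def gNeg (A : ConstGame) : ConstGame where
  legalPos Φ := A.legalPos (Φ.map Labmove.flip)
  wn Γ := (A.wn Γ.flip).opp

def projPar (b : Bool) : Labmove → Option Labmove
  | ⟨p, .par b' β⟩ => if b' = b then some ⟨p, β⟩ else none
  | _ => none

/-- Parallel (binary) conjunction of constant games. -/
def gameAnd (A B : ConstGame) : ConstGame where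
  legalPos Φ :=
    (∀ lm ∈ Φ, ∃ b β, lm.move = Move.par b β) ∧
    A.legalPos (Φ.filterMap (projPar false)) ∧ B.legalPos (Φ.filterMap (projPar true))
  wn Γ :=
    if A.wn (Γ.fmap (projPar false)) = .top ∧ B.wn (Γ.fmap (projPar true)) = .top
    then .top else .bot

/-- Choice conjunction over an index set `S`: `⊥` chooses `n ∈ S` and play continues
in `f n`; if no choice is ever made, `⊤` wins. -/
def gameCAnd (S : Set ℕ) (f : ℕ → ConstGame) : ConstGame where
  legalPos := fun Φ =>
    match Φ with
    | [] => True
    | ⟨.bot, .choice n⟩ :: rest => n ∈ S ∧ (f n).legalPos rest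
    | _ => False
  wn := fun Γ =>
    match Γ with
    | .fin [] => .top
    | .fin (⟨.bot, .choice n⟩ :: rest) => (f n).wn (.fin rest)
    | .fin (_ :: _) => .top
    | .inf g =>
      match g 0 with
      | ⟨.bot, .choice n⟩ => (f n).wn (.inf fun k => g (k + 1))
      | _ => .top

/-- Blind universal quantification (for unistructural families of games). -/
def gameAll (f : ℕ → ConstGame) : ConstGame where
  legalPos Φ := ∀ c, (f c).legalPos Φ
  wn Γ := if ∀ c, (f c).wn Γ = .top then .top else .bot

/-! ## Trees of games and dfb-reduction -/

/-- A tree of (constant) games. -/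
inductive GTree where
  | leaf : ConstGame → GTree
  | node : GTree → GTree → GTree

/-- The leaves of a tree of games, together with their (bit-string) addresses. -/
def GTree.leaves : GTree → List (List Bool × ConstGame)
  | .leaf A => [([], A)]
  | .node l r =>
      (l.leaves.map fun p => (false :: p.1, p.2)) ++ (r.leaves.map fun p => (true :: p.1, p.2))

/-- `w` is a prefix of the infinite bit string `x`. -/
def prefInf (w : List Bool) (x : ℕ → Bool) : Prop :=
  ∀ (i : ℕ) (hi : i < w.length), w.get ⟨i, hi⟩ = x i

/-- Projection to the succedent: keep labmoves `℘S.β`, stripping the prefix. -/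
def projS : Labmove → Option Labmove
  | ⟨p, .succd β⟩ => some ⟨p, β⟩
  | _ => none

/-- Projection along an infinite bit string `x`: keep labmoves `℘w.β` with `w ≼ x`,
stripping the prefix. -/
def projA (x : ℕ → Bool) : Labmove → Option Labmove
  | ⟨p, .ante w β⟩ => if prefInf w x then some ⟨p, β⟩ else none
  | _ => none

/-- Shape/precedence conditions on the `i`-th labmove of a position of a dfb-reduction
(conditions 1-3 of the definition of dfb-reduction). -/
def dfbShape (T : GTree) (Φ : List Labmove) (i : ℕ) : Labmove → Prop
  | ⟨_, .succd _⟩ => True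
  | ⟨.top, .repl w⟩ =>
      (∃ p ∈ T.leaves, p.1 = w) ∨
      (w ≠ [] ∧ ∃ j < i, Φ[j]? = some ⟨.top, .repl w.dropLast⟩)
  | ⟨.bot, .repl _⟩ => False
  | ⟨_, .ante w _⟩ =>
      (∃ p ∈ T.leaves, w <+: p.1) ∨
      (w ≠ [] ∧ ∃ j < i, Φ[j]? = some ⟨.top, .repl w.dropLast⟩)
  | ⟨_, .choice _⟩ => False
  | ⟨_, .par _ _⟩ => False

/-- Legal positions of the dfb-reduction `T ∘̸– B`. -/
def dfbLegalPos (T : GTree) (B : ConstGame) (Φ : List Labmove) : Prop :=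
  (∀ (i : ℕ) (lm : Labmove), Φ[i]? = some lm → dfbShape T Φ i lm) ∧
  (∀ w : List Bool, Φ.count ⟨Player.top, Move.repl w⟩ ≤ 1) ∧
  B.legalPos (Φ.filterMap projS) ∧
  (∀ p ∈ T.leaves, ∀ x : ℕ → Bool, prefInf p.1 x →
      (gNeg p.2).legalPos (Φ.filterMap (projA x)))

/-- Replicative labmoves. -/
def isReplMove (lm : Labmove) : Prop := ∃ w, lm.move = Move.repl w

/-- The dfb-reduction of game `B` to the tree of games `T`.  `⊤` wins a legal run iff
it has made only finitely many replications and either wins in the succedent or wins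
(as `⊥`) in some antecedental leaf. -/
def dfb (T : GTree) (B : ConstGame) : ConstGame where
  legalPos := dfbLegalPos T B
  wn Γ :=
    if Γ.finMany isReplMove ∧
       (B.wn (Γ.fmap projS) = .top ∨
        ∃ p ∈ T.leaves, ∃ x : ℕ → Bool, prefInf p.1 x ∧
          (gNeg p.2).wn (Γ.fmap (projA x)) = .top)
    then .top else .bot

/-! ## Syntax: terms, formulas, sequents -/

/-- Function symbols: an arity and an index (infinitely many of each arity). -/
structure FuncSym where
  ar : ℕ
  idx : ℕ
deriving DecidableEq

/-- Predicate symbols: the logical symbol `=` plus infinitely many nonlogical symbols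
of each arity. -/
inductive PredSym where
  | eq
  | pred : ℕ → ℕ → PredSym
deriving DecidableEq

def PredSym.arity : PredSym → ℕ
  | .eq => 2
  | .pred n _ => n

/-- Terms: variables, constants (decimal numerals, i.e. natural numbers), and
applications of function symbols. -/
inductive Term where
  | var : ℕ → Term
  | const : ℕ → Term
  | func : (f : FuncSym) → (Fin f.ar → Term) → Term

/-- Formulas.  `¬` is only applied to atoms: an atom carries a polarity bit
(`true` = negated).  `→` is an abbreviation (see `Fml.imp`). -/
inductive Fml where
  | tt
  | ff
  | atom : Bool → (p : PredSym) → (Fin p.arity → Term) → Fml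
  | and : Fml → Fml → Fml
  | or : Fml → Fml → Fml
  | cand : Fml → Fml → Fml
  | cor : Fml → Fml → Fml
  | all : ℕ → Fml → Fml
  | ex : ℕ → Fml → Fml
  | call : ℕ → Fml → Fml
  | cex : ℕ → Fml → Fml

def duo {α : Sort*} (a b : α) : Fin 2 → α := fun i => if i.val = 0 then a else b

/-- An interpretation: sends function symbols to functions on `ℕ` and predicate symbols
to elementary games (predicates), such that `=` is interpreted as an equivalence
relation preserved by all interpreted functions and respected by all interpreted
predicates. -/
structure Interp where
  fn : (f : FuncSym) → (Fin f.ar → ℕ) → ℕ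
  pr : (p : PredSym) → (Fin p.arity → ℕ) → Prop
  eq_equiv : Equivalence fun a b => pr .eq (duo a b)
  fn_congr : ∀ (f : FuncSym) (u v : Fin f.ar → ℕ),
      (∀ i, pr .eq (duo (u i) (v i))) → pr .eq (duo (fn f u) (fn f v))
  pr_congr : ∀ (p : PredSym) (u v : Fin p.arity → ℕ),
      (∀ i, pr .eq (duo (u i) (v i))) → (pr p u ↔ pr p v)

def Term.eval (I : Interp) (e : Valuation) : Term → ℕ
  | .var x => e x
  | .const c => c
  | .func f ts => I.fn f fun i => (ts i).eval I e

def Valuation.upd (e : Valuation) (x c : ℕ) : Valuation := fun y => if y = x then c else e y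

/-- The game `F*` represented by a formula `F` under an interpretation `*`. -/
def Fml.game (I : Interp) : Fml → Valuation → ConstGame
  | .tt, _ => elemGame True
  | .ff, _ => elemGame False
  | .atom b p a, e => elemGame ((I.pr p fun i => (a i).eval I e) ↔ b = false)
  | .and A B, e => gameAnd (A.game I e) (B.game I e)
  | .or A B, e => gNeg (gameAnd (gNeg (A.game I e)) (gNeg (B.game I e)))
  | .cand A B, e => gameCAnd {n | n = 0 ∨ n = 1} fun n =>
      if n = 0 then A.game I e else B.game I e
  | .cor A B, e => gNeg (gameCAnd {n | n = 0 ∨ n = 1} fun n =>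
      gNeg (if n = 0 then A.game I e else B.game I e))
  | .all x A, e => gameAll fun c => A.game I (e.upd x c)
  | .ex x A, e => gNeg (gameAll fun c => gNeg (A.game I (e.upd x c)))
  | .call x A, e => gameCAnd Set.univ fun c => A.game I (e.upd x c)
  | .cex x A, e => gNeg (gameCAnd Set.univ fun c => gNeg (A.game I (e.upd x c)))

/-- A sequent `E₁,…,Eₙ ∘̸– F` with a list antecedent (standard-tree form). -/
structure Sequent where
  ante : List Fml
  succ : Fml

/-- The standard (right-nested) tree with the given yield. -/
def stdGTree (A : ConstGame) : List ConstGame → GTree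
  | [] => .leaf A
  | B :: rest => .node (.leaf A) (stdGTree B rest)

/-- The game represented by a sequent: the dfb-reduction of the succedent to the
standard tree of the antecedent (the succedent itself if the antecedent is empty). -/
def Sequent.game (I : Interp) (S : Sequent) : Game := fun e =>
  match S.ante with
  | [] => S.succ.game I e
  | E :: rest => dfb (stdGTree (E.game I e) (rest.map fun G => G.game I e)) (S.succ.game I e)

/-! ## Uniform-constructive soundness of rules -/

/-- A rule (a relation between lists of premise sequents and conclusion sequents) is
uniform-constructively sound iff there is an (effective) procedure turning machines
winning the premises under an interpretation into a machine winning the conclusion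
under the same interpretation. -/
def UCSound (R : List Sequent → Sequent → Prop) : Prop :=
  ∃ F : List Sequent → Sequent → List BMEPM → BMEPM,
    ∀ (Xs : List Sequent) (X0 : Sequent) (Ms : List BMEPM),
      R Xs X0 → Ms.length = Xs.length →
      ∀ (I : Interp) (e : Valuation),
        (∀ (i : ℕ) (hx : i < Xs.length) (hm : i < Ms.length),
            (Ms[i]'hm).WinsOn ((Xs[i]'hx).game I) e) →
        (F Xs X0 Ms).WinsOn (X0.game I) e

/-! ## Trees of formulas and general sequents -/

/-- A (nonempty) tree of formulas. -/
inductive FTree where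
  | leaf : Fml → FTree
  | node : FTree → FTree → FTree

/-- The yield of a tree of formulas. -/
def FTree.yield : FTree → List Fml
  | .leaf F => [F]
  | .node l r => l.yield ++ r.yield

def FTree.toGTree (I : Interp) (e : Valuation) : FTree → GTree
  | .leaf F => .leaf (F.game I e)
  | .node l r => .node (l.toGTree I e) (r.toGTree I e)

/-- A sequent whose antecedent is an arbitrary (possibly empty) tree of formulas. -/
structure TSeq where
  ante : Option FTree
  succ : Fml

def TSeq.game (I : Interp) (S : TSeq) : Game := fun e =>
  match S.ante with
  | none => S.succ.game I e
  | some T => dfb (T.toGTree I e) (S.succ.game I e)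

def stdFTree1 (F : Fml) : List Fml → FTree
  | [] => .leaf F
  | G :: rest => .node (.leaf F) (stdFTree1 G rest)

/-- The standard tree of formulas with a given yield. -/
def stdFTree : List Fml → Option FTree
  | [] => none
  | F :: rest => some (stdFTree1 F rest)

/-- Uniform-constructive soundness, for rules on tree-antecedent sequents. -/
def UCSoundT (R : List TSeq → TSeq → Prop) : Prop :=
  ∃ F : List TSeq → TSeq → List BMEPM → BMEPM,
    ∀ (Xs : List TSeq) (X0 : TSeq) (Ms : List BMEPM),
      R Xs X0 → Ms.length = Xs.length →
      ∀ (I : Interp) (e : Valuation),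
        (∀ (i : ℕ) (hx : i < Xs.length) (hm : i < Ms.length),
            (Ms[i]'hm).WinsOn ((Xs[i]'hx).game I) e) →
        (F Xs X0 Ms).WinsOn (X0.game I) e

/-! ## Substitution, occurrences -/

def Term.subst : Term → ℕ → Term → Term
  | .var y, x, t => if y = x then t else .var y
  | .const d, _, _ => .const d
  | .func f ts, x, t => .func f fun i => (ts i).subst x t

/-- Replace all free occurrences of variable `x` by term `t`. -/
def Fml.subst (x : ℕ) (t : Term) : Fml → Fml
  | .tt => .tt
  | .ff => .ff
  | .atom b p a => .atom b p fun i => (a i).subst x t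
  | .and A B => .and (A.subst x t) (B.subst x t)
  | .or A B => .or (A.subst x t) (B.subst x t)
  | .cand A B => .cand (A.subst x t) (B.subst x t)
  | .cor A B => .cor (A.subst x t) (B.subst x t)
  | .all y A => .all y (if y = x then A else A.subst x t)
  | .ex y A => .ex y (if y = x then A else A.subst x t)
  | .call y A => .call y (if y = x then A else A.subst x t)
  | .cex y A => .cex y (if y = x then A else A.subst x t)

def Term.hasVar (y : ℕ) : Term → Prop
  | .var x => x = y
  | .const _ => False
  | .func _ ts => ∃ i, (ts i).hasVar y

/-- `y` occurs (free, bound or as a binder) in the formula. -/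
def Fml.mentionsVar (y : ℕ) : Fml → Prop
  | .tt => False
  | .ff => False
  | .atom _ _ a => ∃ i, (a i).hasVar y
  | .and A B => A.mentionsVar y ∨ B.mentionsVar y
  | .or A B => A.mentionsVar y ∨ B.mentionsVar y
  | .cand A B => A.mentionsVar y ∨ B.mentionsVar y
  | .cor A B => A.mentionsVar y ∨ B.mentionsVar y
  | .all x A => x = y ∨ A.mentionsVar y
  | .ex x A => x = y ∨ A.mentionsVar y
  | .call x A => x = y ∨ A.mentionsVar y
  | .cex x A => x = y ∨ A.mentionsVar y

/-- `y` occurs as a bound variable (i.e. is used as a binder) in the formula. -/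
def Fml.bindsVar (y : ℕ) : Fml → Prop
  | .tt => False
  | .ff => False
  | .atom _ _ _ => False
  | .and A B => A.bindsVar y ∨ B.bindsVar y
  | .or A B => A.bindsVar y ∨ B.bindsVar y
  | .cand A B => A.bindsVar y ∨ B.bindsVar y
  | .cor A B => A.bindsVar y ∨ B.bindsVar y
  | .all x A => x = y ∨ A.bindsVar y
  | .ex x A => x = y ∨ A.bindsVar y
  | .call x A => x = y ∨ A.bindsVar y
  | .cex x A => x = y ∨ A.bindsVar y

/-- `y` occurs free in the formula. -/
def Fml.freeVar (y : ℕ) : Fml → Prop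
  | .tt => False
  | .ff => False
  | .atom _ _ a => ∃ i, (a i).hasVar y
  | .and A B => A.freeVar y ∨ B.freeVar y
  | .or A B => A.freeVar y ∨ B.freeVar y
  | .cand A B => A.freeVar y ∨ B.freeVar y
  | .cor A B => A.freeVar y ∨ B.freeVar y
  | .all x A => x ≠ y ∧ A.freeVar y
  | .ex x A => x ≠ y ∧ A.freeVar y
  | .call x A => x ≠ y ∧ A.freeVar y
  | .cex x A => x ≠ y ∧ A.freeVar y

def Sequent.mentionsVar (S : Sequent) (y : ℕ) : Prop :=
  (∃ E ∈ S.ante, E.mentionsVar y) ∨ S.succ.mentionsVar y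

def Sequent.bindsVar (S : Sequent) (y : ℕ) : Prop :=
  (∃ E ∈ S.ante, E.bindsVar y) ∨ S.succ.bindsVar y

/-! ## Elementarization, classical semantics, stability -/

/-- A formula is elementary iff it contains no choice operators. -/
def Fml.elementary : Fml → Prop
  | .tt => True
  | .ff => True
  | .atom _ _ _ => True
  | .and A B => A.elementary ∧ B.elementary
  | .or A B => A.elementary ∧ B.elementary
  | .cand _ _ => False
  | .cor _ _ => False
  | .all _ A => A.elementary
  | .ex _ A => A.elementary
  | .call _ _ => False
  | .cex _ _ => False

/-- The elementarization of a formula: replace all `⊔`/`⊔x`-subformulas by `⊥` and all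
`⊓`/`⊓x`-subformulas by `⊤`. -/
def Fml.elz : Fml → Fml
  | .tt => .tt
  | .ff => .ff
  | .atom b p a => .atom b p a
  | .and A B => .and A.elz B.elz
  | .or A B => .or A.elz B.elz
  | .cand _ _ => .tt
  | .cor _ _ => .ff
  | .all x A => .all x A.elz
  | .ex x A => .ex x A.elz
  | .call _ _ => .tt
  | .cex _ _ => .ff

/-- Standard (DeMorgan) negation of a formula. -/
def Fml.negF : Fml → Fml
  | .tt => .ff
  | .ff => .tt
  | .atom b p a => .atom (!b) p a
  | .and A B => .or A.negF B.negF
  | .or A B => .and A.negF B.negF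
  | .cand A B => .cor A.negF B.negF
  | .cor A B => .cand A.negF B.negF
  | .all x A => .ex x A.negF
  | .ex x A => .all x A.negF
  | .call x A => .cex x A.negF
  | .cex x A => .call x A.negF

/-- Implication as the standard abbreviation. -/
def Fml.imp (A B : Fml) : Fml := .or A.negF B

def bigAnd : Fml → List Fml → Fml
  | A, [] => A
  | A, B :: rest => .and A (bigAnd B rest)

/-- The elementarization of a sequent `G₁,…,Gₙ ∘̸– F`:
the elementary formula `‖G₁‖∧…∧‖Gₙ‖ → ‖F‖`. -/
def Sequent.elz (S : Sequent) : Fml :=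
  match S.ante with
  | [] => S.succ.elz
  | E :: rest => (bigAnd E.elz (rest.map Fml.elz)).imp S.succ.elz

/-- A classical first-order structure (with `=` interpreted as identity). -/
structure Struc where
  D : Type
  ne : Nonempty D
  cn : ℕ → D
  fn : (f : FuncSym) → (Fin f.ar → D) → D
  pr : (p : PredSym) → (Fin p.arity → D) → Prop
  eq_iden : ∀ a b : D, pr .eq (duo a b) ↔ a = b

def Term.evalS (St : Struc) (e : ℕ → St.D) : Term → St.D
  | .var x => e x
  | .const c => St.cn c
  | .func f ts => St.fn f fun i => (ts i).evalS St e

/-- Classical (Tarskian) truth of a formula in a structure under an assignment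
(choice operators are read classically; they do not occur in elementary formulas). -/
def Fml.trueIn (St : Struc) : Fml → (ℕ → St.D) → Prop
  | .tt, _ => True
  | .ff, _ => False
  | .atom b p a, e => ((St.pr p fun i => (a i).evalS St e) ↔ b = false)
  | .and A B, e => A.trueIn St e ∧ B.trueIn St e
  | .or A B, e => A.trueIn St e ∨ B.trueIn St e
  | .cand A B, e => A.trueIn St e ∧ B.trueIn St e
  | .cor A B, e => A.trueIn St e ∨ B.trueIn St e
  | .all x A, e => ∀ d, A.trueIn St fun y => if y = x then d else e y
  | .ex x A, e => ∃ d, A.trueIn St fun y => if y = x then d else e y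
  | .call x A, e => ∀ d, A.trueIn St fun y => if y = x then d else e y
  | .cex x A, e => ∃ d, A.trueIn St fun y => if y = x then d else e y

/-- Classical validity (= provability in classical predicate calculus with `=`, by
Gödel's completeness theorem). -/
def FValid (F : Fml) : Prop := ∀ (St : Struc) (e : ℕ → St.D), F.trueIn St e

/-- A sequent is stable iff its elementarization is classically valid. -/
def Sequent.stable (S : Sequent) : Prop := FValid S.elz

/-! ## The system CL12 -/

/-- Surface contexts: a formula with a hole not in the scope of any choice operator. -/
inductive FCtx where
  | hole
  | andL : FCtx → Fml → FCtx
  | andR : Fml → FCtx → FCtx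
  | orL : FCtx → Fml → FCtx
  | orR : Fml → FCtx → FCtx
  | allC : ℕ → FCtx → FCtx
  | exC : ℕ → FCtx → FCtx

def FCtx.fill : FCtx → Fml → Fml
  | .hole, H => H
  | .andL C B, H => .and (C.fill H) B
  | .andR A C, H => .and A (C.fill H)
  | .orL C B, H => .or (C.fill H) B
  | .orR A C, H => .or A (C.fill H)
  | .allC x C, H => .all x (C.fill H)
  | .exC x C, H => .ex x (C.fill H)

/-- `t` is a constant or a variable with no bound occurrences in the premise. -/
def TermOk (t : Term) (prem : Sequent) : Prop :=
  (∃ c, t = Term.const c) ∨ (∃ y, t = Term.var y ∧ ¬ prem.bindsVar y)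

/-- The single-premise rules of CL12: `⊓`-Choose, `⊔`-Choose, `⊓x`-Choose,
`⊔x`-Choose and Replicate.  `NonWaitStep Y X` means `X` follows from premise `Y`. -/
inductive NonWaitStep : Sequent → Sequent → Prop
  | candChoose (G K : List Fml) (C : FCtx) (H0 H1 : Fml) (i : Bool) (F : Fml) :
      NonWaitStep ⟨G ++ (C.fill (if i then H1 else H0)) :: K, F⟩
                  ⟨G ++ (C.fill (.cand H0 H1)) :: K, F⟩
  | corChoose (G : List Fml) (C : FCtx) (H0 H1 : Fml) (i : Bool) :
      NonWaitStep ⟨G, C.fill (if i then H1 else H0)⟩ ⟨G, C.fill (.cor H0 H1)⟩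
  | callChoose (G K : List Fml) (C : FCtx) (x : ℕ) (H : Fml) (t : Term) (F : Fml) :
      TermOk t ⟨G ++ (C.fill (H.subst x t)) :: K, F⟩ →
      NonWaitStep ⟨G ++ (C.fill (H.subst x t)) :: K, F⟩
                  ⟨G ++ (C.fill (.call x H)) :: K, F⟩
  | cexChoose (G : List Fml) (C : FCtx) (x : ℕ) (H : Fml) (t : Term) :
      TermOk t ⟨G, C.fill (H.subst x t)⟩ →
      NonWaitStep ⟨G, C.fill (H.subst x t)⟩ ⟨G, C.fill (.cex x H)⟩
  | replicate (G K : List Fml) (E F : Fml) :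
      NonWaitStep ⟨G ++ E :: K ++ [E], F⟩ ⟨G ++ E :: K, F⟩

/-- `Y` follows from the set `P` of premises by Wait. -/
def WaitStep (P : Set Sequent) (Y : Sequent) : Prop :=
  Y.stable ∧
  (∀ (C : FCtx) (H0 H1 : Fml), Y.succ = C.fill (.cand H0 H1) →
      (⟨Y.ante, C.fill H0⟩ : Sequent) ∈ P ∧ (⟨Y.ante, C.fill H1⟩ : Sequent) ∈ P) ∧
  (∀ (G K : List Fml) (C : FCtx) (H0 H1 : Fml),
      Y.ante = G ++ (C.fill (.cor H0 H1)) :: K →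
      (⟨G ++ (C.fill H0) :: K, Y.succ⟩ : Sequent) ∈ P ∧
      (⟨G ++ (C.fill H1) :: K, Y.succ⟩ : Sequent) ∈ P) ∧
  (∀ (C : FCtx) (x : ℕ) (H : Fml), Y.succ = C.fill (.call x H) →
      ∃ y, ¬ Y.mentionsVar y ∧
        (⟨Y.ante, C.fill (H.subst x (.var y))⟩ : Sequent) ∈ P) ∧
  (∀ (G K : List Fml) (C : FCtx) (x : ℕ) (H : Fml),
      Y.ante = G ++ (C.fill (.cex x H)) :: K →
      ∃ y, ¬ Y.mentionsVar y ∧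
        (⟨G ++ (C.fill (H.subst x (.var y))) :: K, Y.succ⟩ : Sequent) ∈ P)

/-- `X` follows from premises in `P` by one of the rules of CL12. -/
def CL12Step (P : Set Sequent) (X : Sequent) : Prop :=
  (∃ Y ∈ P, NonWaitStep Y X) ∨ WaitStep P X

/-- `L` is a CL12-proof of `X`: a nonempty sequence of sequents ending in `X` in which
every sequent follows from some earlier ones by a rule of CL12. -/
def IsCL12Proof (L : List Sequent) (X : Sequent) : Prop :=
  L ≠ [] ∧ L.getLast? = some X ∧
  ∀ (i : ℕ) (h : i < L.length), CL12Step {Y | Y ∈ L.take i} (L[i]'h)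

def CL12Proves (X : Sequent) : Prop := ∃ L, IsCL12Proof L X

/-- `Y` is a `⊥`-development of `X`. -/
inductive BotDev : Sequent → Sequent → Prop
  | c1 (E : List Fml) (C : FCtx) (H0 H1 : Fml) (i : Bool) :
      BotDev ⟨E, C.fill (.cand H0 H1)⟩ ⟨E, C.fill (if i then H1 else H0)⟩
  | c2 (E K : List Fml) (C : FCtx) (H0 H1 : Fml) (i : Bool) (F : Fml) :
      BotDev ⟨E ++ (C.fill (.cor H0 H1)) :: K, F⟩
             ⟨E ++ (C.fill (if i then H1 else H0)) :: K, F⟩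
  | c3 (E : List Fml) (C : FCtx) (x : ℕ) (H : Fml) (y : ℕ) :
      ¬ (Sequent.mk E (C.fill (.call x H))).mentionsVar y →
      BotDev ⟨E, C.fill (.call x H)⟩ ⟨E, C.fill (H.subst x (.var y))⟩
  | c4 (E K : List Fml) (C : FCtx) (x : ℕ) (H : Fml) (y : ℕ) (F : Fml) :
      ¬ (Sequent.mk (E ++ (C.fill (.cex x H)) :: K) F).mentionsVar y →
      BotDev ⟨E ++ (C.fill (.cex x H)) :: K, F⟩
             ⟨E ++ (C.fill (H.subst x (.var y))) :: K, F⟩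

/-- `Y` is a `⊤`-development of `X`: `X` follows from `Y` by a rule other than Wait. -/
def TopDev (X Y : Sequent) : Prop := NonWaitStep Y X

/-! ## Arithmetic: CLA1 and CLA2 -/

def fSucc : FuncSym := ⟨1, 0⟩
def fPlus : FuncSym := ⟨2, 0⟩
def fTimes : FuncSym := ⟨2, 1⟩

def tv (x : ℕ) : Term := .var x
def t0 : Term := .const 0
def tS (t : Term) : Term := .func fSucc fun _ => t
def tPlus (a b : Term) : Term := .func fPlus (duo a b)
def tTimes (a b : Term) : Term := .func fTimes (duo a b)
def fEq (a b : Term) : Fml := .atom false .eq (duo a b)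
def fNeq (a b : Term) : Fml := .atom true .eq (duo a b)

/-- The language of CLA1: only the constant `0`, the function symbols `'`, `+`, `×`
and the predicate symbol `=`. -/
def Term.inLangA : Term → Prop
  | .var _ => True
  | .const c => c = 0
  | .func f ts => (f = fSucc ∨ f = fPlus ∨ f = fTimes) ∧ ∀ i, (ts i).inLangA

def Fml.inLangA : Fml → Prop
  | .tt => True
  | .ff => True
  | .atom _ p a => p = .eq ∧ ∀ i, (a i).inLangA
  | .and A B => A.inLangA ∧ B.inLangA
  | .or A B => A.inLangA ∧ B.inLangA
  | .cand A B => A.inLangA ∧ B.inLangA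
  | .cor A B => A.inLangA ∧ B.inLangA
  | .all _ A => A.inLangA
  | .ex _ A => A.inLangA
  | .call _ A => A.inLangA
  | .cex _ A => A.inLangA

def Sequent.inLangA (S : Sequent) : Prop := (∀ E ∈ S.ante, E.inLangA) ∧ S.succ.inLangA

def allClose : List ℕ → Fml → Fml
  | [], F => F
  | v :: vs, F => .all v (allClose vs F)

def callClose : List ℕ → Fml → Fml
  | [], F => F
  | v :: vs, F => .call v (callClose vs F)

/-- The induction formula `F(0) ∧ ∀x(F(x)→F(x')) → ∀x F(x)`. -/
def indFml (F : Fml) (x : ℕ) : Fml :=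
  (Fml.and (F.subst x t0) (.all x (F.imp (F.subst x (tS (tv x)))))).imp (.all x F)

/-- The axioms of PA: the `∀`-closures of the six defining axioms of `'`, `+`, `×`
together with the induction scheme for elementary formulas (of the language `lang`). -/
inductive IsPAAx (lang : Fml → Prop) : Fml → Prop
  | a1 : IsPAAx lang (.all 0 (fNeq t0 (tS (tv 0))))
  | a2 : IsPAAx lang (.all 0 (.all 1 ((fEq (tS (tv 0)) (tS (tv 1))).imp (fEq (tv 0) (tv 1)))))
  | a3 : IsPAAx lang (.all 0 (fEq (tPlus (tv 0) t0) (tv 0)))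
  | a4 : IsPAAx lang (.all 0 (.all 1
      (fEq (tPlus (tv 0) (tS (tv 1))) (tS (tPlus (tv 0) (tv 1))))))
  | a5 : IsPAAx lang (.all 0 (fEq (tTimes (tv 0) t0) t0))
  | a6 : IsPAAx lang (.all 0 (.all 1
      (fEq (tTimes (tv 0) (tS (tv 1))) (tPlus (tTimes (tv 0) (tv 1)) (tv 0)))))
  | ind (vs : List ℕ) (F : Fml) (x : ℕ) :
      F.elementary → lang F → (∀ y, (indFml F x).freeVar y → y ∈ vs) →
      IsPAAx lang (allClose vs (indFml F x))

/-- Axiom 7 of CLA1: `⊓x⊔y(y = x')`. -/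
def axSeven : Fml := .call 0 (.cex 1 (fEq (tv 1) (tS (tv 0))))

/-- The axioms of a CL-based arithmetic: the PA axioms plus `⊓x⊔y(y = x')`. -/
def IsCLAAx (lang : Fml → Prop) (A : Fml) : Prop := IsPAAx lang A ∨ A = axSeven

def CLA1Ax : Fml → Prop := IsCLAAx Fml.inLangA
def CLA2Ax : Fml → Prop := IsCLAAx fun _ => True

/-- (Extended) natural deductions of the CL-based arithmetics: a deduction of `F` from
hypotheses `Γ`, where `lc` is Logical Consequence (carrying a CL12-proof of the
corresponding sequent, so that these deductions are *extended* proofs) and `ci` is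
Constructive Induction (with a fresh variable `x`). -/
inductive CLADed (ax : Fml → Prop) : List Fml → Fml → Type
  | hyp (Γ : List Fml) (F : Fml) : F ∈ Γ → CLADed ax Γ F
  | axm (Γ : List Fml) (F : Fml) : ax F → CLADed ax Γ F
  | lc (Γ Gs : List Fml) (F : Fml) (L : List Sequent) :
      IsCL12Proof L ⟨Gs, F⟩ → (∀ G ∈ Gs, CLADed ax Γ G) → CLADed ax Γ F
  | ci (Γ : List Fml) (F : Fml) (x : ℕ) :
      (∀ E ∈ Γ, ¬ E.mentionsVar x) →
      CLADed ax Γ (F.subst x t0) →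
      CLADed ax (F :: Γ) (F.subst x (tS (tv x))) →
      CLADed ax Γ (.call x F)

/-- Provability of the sequent `Γ ∘̸– F` in a CL-based arithmetic. -/
def CLAProves (ax : Fml → Prop) (Γ : List Fml) (F : Fml) : Prop := Nonempty (CLADed ax Γ F)

/-- The standard interpretation of the function symbols. -/
def stdFn (f : FuncSym) (v : Fin f.ar → ℕ) : ℕ :=
  if h : f = fSucc then v ⟨0, by rw [h]; exact Nat.zero_lt_one⟩ + 1
  else if h : f = fPlus then
    v ⟨0, by rw [h]; exact Nat.zero_lt_two⟩ + v ⟨1, by rw [h]; exact Nat.one_lt_two⟩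
  else if h : f = fTimes then
    v ⟨0, by rw [h]; exact Nat.zero_lt_two⟩ * v ⟨1, by rw [h]; exact Nat.one_lt_two⟩
  else 0

def stdPr (p : PredSym) (v : Fin p.arity → ℕ) : Prop :=
  match p, v with
  | .eq, v => v ⟨0, Nat.zero_lt_two⟩ = v ⟨1, Nat.one_lt_two⟩
  | .pred _ _, _ => False

/-- The standard interpretation `†`. -/
def stdInterp : Interp where
  fn := stdFn
  pr := stdPr
  eq_equiv := ⟨fun _ => rfl, fun h => h.symm, fun h1 h2 => h1.trans h2⟩
  fn_congr := fun f u v h => by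
    have huv : u = v := funext fun i => h i
    show stdFn f u = stdFn f v
    rw [huv]
  pr_congr := fun p u v h => by
    have huv : u = v := funext fun i => h i
    rw [huv]

/-- An interpretation is standard iff it interprets `=` as identity, `'` as successor,
`+` as sum and `×` as product. -/
def Interp.IsStandard (I : Interp) : Prop :=
  (∀ v : Fin 2 → ℕ, I.pr .eq v ↔ v 0 = v 1) ∧
  (∀ v : Fin 1 → ℕ, I.fn fSucc v = v 0 + 1) ∧
  (∀ v : Fin 2 → ℕ, I.fn fPlus v = v 0 + v 1) ∧
  (∀ v : Fin 2 → ℕ, I.fn fTimes v = v 0 * v 1)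

/-- Provability in classical Peano arithmetic (by Gödel's completeness theorem:
semantic consequence of the PA axioms). -/
def PAProvable (F : Fml) : Prop :=
  ∀ (St : Struc) (e : ℕ → St.D),
    (∀ A, IsPAAx Fml.inLangA A → ∀ e' : ℕ → St.D, A.trueIn St e') → F.trueIn St e

/-! ## Primitive-recursive constructions -/

/-- Absolute primitive-recursive definitions (forms (I), (II), (III)). -/
inductive PRDefAbs : FuncSym → Fml → Prop
  | defI (f : FuncSym) (h : f.ar = 1) :
      PRDefAbs f (.all 0 (fEq (.func f fun _ => tv 0) (tS (tv 0))))
  | defII (f : FuncSym) :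
      PRDefAbs f (allClose (List.range f.ar) (fEq (.func f fun j => tv j.val) t0))
  | defIII (f : FuncSym) (i : Fin f.ar) :
      PRDefAbs f (allClose (List.range f.ar) (fEq (.func f fun j => tv j.val) (tv i.val)))

/-- Relative primitive-recursive definitions (forms (IV) composition and
(V) primitive recursion), together with the list of function symbols in terms of
which the new symbol is defined. -/
inductive PRDefRel : FuncSym → List FuncSym → Fml → Prop
  | defIV (f g : FuncSym) (hs : Fin g.ar → FuncSym)
      (hh : ∀ j, (hs j).ar = f.ar) :
      PRDefRel f (g :: List.ofFn hs)
        (allClose (List.range f.ar)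
          (fEq (.func f fun i => tv i.val)
               (.func g fun j => .func (hs j) fun i => tv i.val)))
  | defV (f g h : FuncSym) (n : ℕ) (hn : f.ar = n) (h1 : 1 ≤ n)
      (hg : g.ar = n - 1) (hh : h.ar = n + 1) :
      PRDefRel f [g, h]
        (.and (allClose (List.range' 1 (n - 1))
                 (fEq (.func f fun i => if i.val = 0 then t0 else tv i.val)
                      (.func g fun j => tv (j.val + 1))))
              (allClose (List.range n)
                 (fEq (.func f fun i => if i.val = 0 then tS (tv 0) else tv i.val)
                      (.func h fun j =>
                        if j.val = 0 then tv 0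
                        else if j.val = 1 then .func f fun i => tv i.val
                        else tv (j.val - 1)))))

/-- `Es` is a primitive-recursive construction of `f`. -/
def IsPRConstruction (f : FuncSym) (Es : List Fml) : Prop :=
  ∃ gs : List FuncSym, gs.length = Es.length ∧ gs.Nodup ∧ gs.getLast? = some f ∧
    ∀ (i : ℕ) (hi : i < Es.length) (hg : i < gs.length),
      PRDefAbs (gs[i]'hg) (Es[i]'hi) ∨
      ∃ deps : List FuncSym, PRDefRel (gs[i]'hg) deps (Es[i]'hi) ∧
        ∀ d ∈ deps, ∃ (j : ℕ) (hj : j < gs.length), j < i ∧ gs[j]'hj = d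

/-- The goal formula `⊓x₁…⊓xₙ⊔y (f(x₁,…,xₙ) = y)`. -/
def prGoal (f : FuncSym) : Fml :=
  callClose (List.range f.ar)
    (.cex f.ar (fEq (.func f fun i => tv i.val) (tv f.ar)))

/-! ### Auxiliary lemmas for Statement 19 -/

section Aux

@[simp] theorem duo_zero {α : Sort*} (a b : α) : duo a b 0 = a := rfl
@[simp] theorem duo_one {α : Sort*} (a b : α) : duo a b 1 = b := rfl

theorem duo_comp {α β : Sort*} (f : α → β) (a b : α) :
    (fun i => f (duo a b i)) = duo (f a) (f b) := by
  funext i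
  by_cases h : (i : ℕ) = 0 <;> simp [duo, h]

@[simp] theorem subst_tv (n x : ℕ) (t : Term) :
    (tv n).subst x t = if n = x then t else tv n := rfl

@[simp] theorem subst_t0 (x : ℕ) (t : Term) : t0.subst x t = t0 := rfl

@[simp] theorem subst_tS (s : Term) (x : ℕ) (t : Term) :
    (tS s).subst x t = tS (s.subst x t) := rfl

@[simp] theorem subst_fEq (s u : Term) (x : ℕ) (t : Term) :
    (fEq s u).subst x t = fEq (s.subst x t) (u.subst x t) := by
  simp only [fEq, Fml.subst]
  congr 1
  exact duo_comp (fun w => w.subst x t) s u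

@[simp] theorem subst_fNeq (s u : Term) (x : ℕ) (t : Term) :
    (fNeq s u).subst x t = fNeq (s.subst x t) (u.subst x t) := by
  simp only [fNeq, Fml.subst]
  congr 1
  exact duo_comp (fun w => w.subst x t) s u

@[simp] theorem hasVar_tv (n y : ℕ) : (tv n).hasVar y ↔ n = y := Iff.rfl
@[simp] theorem hasVar_t0 (y : ℕ) : t0.hasVar y ↔ False := Iff.rfl
@[simp] theorem hasVar_tS (s : Term) (y : ℕ) : (tS s).hasVar y ↔ s.hasVar y :=
  ⟨fun ⟨_, h⟩ => h, fun h => ⟨⟨0, Nat.zero_lt_one⟩, h⟩⟩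

@[simp] theorem mentions_fEq (s u : Term) (y : ℕ) :
    (fEq s u).mentionsVar y ↔ s.hasVar y ∨ u.hasVar y := by
  show (∃ i : Fin 2, Term.hasVar y (duo s u i)) ↔ _
  constructor
  · rintro ⟨i, hi⟩
    by_cases h : (i : ℕ) = 0
    · left; simpa [duo, h] using hi
    · right; simpa [duo, h] using hi
  · rintro (h | h)
    exacts [⟨0, h⟩, ⟨1, h⟩]

@[simp] theorem mentions_fNeq (s u : Term) (y : ℕ) :
    (fNeq s u).mentionsVar y ↔ s.hasVar y ∨ u.hasVar y := by
  show (∃ i : Fin 2, Term.hasVar y (duo s u i)) ↔ _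
  exact mentions_fEq s u y

@[simp] theorem binds_fEq (s u : Term) (y : ℕ) : (fEq s u).bindsVar y ↔ False := Iff.rfl
@[simp] theorem binds_fNeq (s u : Term) (y : ℕ) : (fNeq s u).bindsVar y ↔ False := Iff.rfl

@[simp] theorem evalS_duo (St : Struc) (e : ℕ → St.D) (a b : Term) :
    (fun i => Term.evalS St e (duo a b i)) = duo (a.evalS St e) (b.evalS St e) :=
  duo_comp _ _ _

theorem fill_elem {C : FCtx} {G : Fml} (h : (C.fill G).elementary) : G.elementary := by
  induction C with
  | hole => exact h
  | andL C B ih => exact ih h.1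
  | andR A C ih => exact ih h.2
  | orL C B ih => exact ih h.1
  | orR A C ih => exact ih h.2
  | allC x C ih => exact ih h
  | exC x C ih => exact ih h

theorem fill_inv_call {C : FCtx} {G : Fml} {x : ℕ} {A : Fml}
    (h : C.fill G = .call x A) : C = .hole ∧ G = .call x A := by
  cases C <;> simp_all [FCtx.fill]

theorem fill_inv_cex {C : FCtx} {G : Fml} {x : ℕ} {A : Fml}
    (h : C.fill G = .cex x A) : C = .hole ∧ G = .cex x A := by
  cases C <;> simp_all [FCtx.fill]

theorem fill_inv_cor {C : FCtx} {G : Fml} {A B : Fml}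
    (h : C.fill G = .cor A B) : C = .hole ∧ G = .cor A B := by
  cases C <;> simp_all [FCtx.fill]

theorem fill_inv_cand {C : FCtx} {G : Fml} {A B : Fml}
    (h : C.fill G = .cand A B) : C = .hole ∧ G = .cand A B := by
  cases C <;> simp_all [FCtx.fill]

/-- An elementary formula is never a surface-fill of a choice formula. -/
theorem elem_ne_fill {F G : Fml} (hF : F.elementary) (hG : ¬ G.elementary)
    (C : FCtx) : F ≠ C.fill G := fun h => hG (fill_elem (h ▸ hF))

theorem append_cons_eq_one {α : Type*} {G K : List α} {X a : α}
    (h : G ++ X :: K = [a]) : G = [] ∧ X = a ∧ K = [] := by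
  match G with
  | [] => simp_all
  | g :: G' => simp_all

theorem append_cons_eq_four {α : Type*} {G K : List α} {X a b c d : α}
    (h : G ++ X :: K = [a, b, c, d]) :
    (G = [] ∧ X = a ∧ K = [b, c, d]) ∨ (G = [a] ∧ X = b ∧ K = [c, d]) ∨
    (G = [a, b] ∧ X = c ∧ K = [d]) ∨ (G = [a, b, c] ∧ X = d ∧ K = []) := by
  match G with
  | [] => simp_all
  | [g1] => simp_all
  | [g1, g2] => simp_all
  | [g1, g2, g3] => simp_all
  | g1 :: g2 :: g3 :: g4 :: G' => simp_all

end Aux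

section Proof19

/-! ### The formulas involved -/

/-- `x=y ⊔ x≠y` (x = var 0, y = var 1). -/
def corEq01 : Fml := .cor (fEq (tv 0) (tv 1)) (fNeq (tv 0) (tv 1))
/-- `⊓x(x=y ⊔ x≠y)`. -/
def F1 : Fml := .call 0 corEq01
/-- `⊓y⊓x(x=y ⊔ x≠y)`. -/
def Hfml : Fml := .call 1 F1
/-- The goal `⊓x⊓y(x=y ⊔ x≠y)`. -/
def goalFml : Fml := .call 0 (.call 1 corEq01)
/-- Axiom 1: `∀x(0 ≠ x')`. -/
def A1 : Fml := .all 0 (fNeq t0 (tS (tv 0)))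
/-- Axiom 2: `∀x∀y(x'=y' → x=y)`. -/
def A2 : Fml := .all 0 (.all 1 ((fEq (tS (tv 0)) (tS (tv 1))).imp (fEq (tv 0) (tv 1))))
/-- `⊔w(u=0 ⊔ u=w')` with u = var 2, w = var 3. -/
def FP : Fml := .cex 3 (.cor (fEq (tv 2) t0) (fEq (tv 2) (tS (tv 3))))
/-- `⊓u⊔w(u=0 ⊔ u=w')`. -/
def PredF : Fml := .call 2 FP

theorem A1_elem : A1.elementary := by simp [A1, Fml.elementary, fNeq]
theorem A2_elem : A2.elementary := by simp [A2, Fml.elementary, Fml.imp, Fml.negF, fEq, fNeq]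
theorem atom_elem (b p a) : (Fml.atom b p a).elementary := trivial

theorem cand_not_elem {A B : Fml} : ¬ (Fml.cand A B).elementary := fun h => h
theorem cor_not_elem {A B : Fml} : ¬ (Fml.cor A B).elementary := fun h => h
theorem call_not_elem {x : ℕ} {A : Fml} : ¬ (Fml.call x A).elementary := fun h => h
theorem cex_not_elem {x : ℕ} {A : Fml} : ¬ (Fml.cex x A).elementary := fun h => h

theorem cor_ne_fill {p q G : Fml} (hG : ∀ A B, G ≠ .cor A B) (C : FCtx) :
    Fml.cor p q ≠ C.fill G := fun h => hG p q (fill_inv_cor h.symm).2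
theorem call_ne_fill {x : ℕ} {p G : Fml} (hG : ∀ y A, G ≠ .call y A) (C : FCtx) :
    Fml.call x p ≠ C.fill G := fun h => hG x p (fill_inv_call h.symm).2
theorem cex_ne_fill {x : ℕ} {p G : Fml} (hG : ∀ y A, G ≠ .cex y A) (C : FCtx) :
    Fml.cex x p ≠ C.fill G := fun h => hG x p (fill_inv_cex h.symm).2

/-! ### Stability lemmas -/

@[simp] theorem pr_eq_duo (St : Struc) (e : ℕ → St.D) (a b : Term) :
    (St.pr .eq fun i => Term.evalS St e (duo a b i)) ↔ a.evalS St e = b.evalS St e := by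
  have h2 : (St.pr .eq fun i => Term.evalS St e (duo a b i)) =
      St.pr .eq (duo (a.evalS St e) (b.evalS St e)) := by
    congr 1
    funext i
    by_cases hh : (i : ℕ) = 0 <;> simp [duo, hh]
  rw [h2]
  exact St.eq_iden _ _

@[simp] theorem atom_subst_duo (b : Bool) (a c : Term) (x : ℕ) (t : Term) :
    (Fml.atom b PredSym.eq fun i => Term.subst (duo a c i) x t)
      = Fml.atom b PredSym.eq (duo (a.subst x t) (c.subst x t)) := by
  congr 1
  funext i
  by_cases hh : (i : ℕ) = 0 <;> simp [duo, hh]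

@[simp] theorem exists_hasVar_duo (y : ℕ) (a c : Term) :
    (∃ i : Fin 2, Term.hasVar y (duo a c i)) ↔ Term.hasVar y a ∨ Term.hasVar y c := by
  constructor
  · rintro ⟨i, hi⟩
    by_cases hh : (i : ℕ) = 0
    · left; simpa [duo, hh] using hi
    · right; simpa [duo, hh] using hi
  · rintro (h | h)
    exacts [⟨0, h⟩, ⟨1, h⟩]

@[simp] theorem forall_not_hasVar_duo (y : ℕ) (a c : Term) :
    (∀ i : Fin PredSym.eq.arity, ¬ Term.hasVar y (duo a c i)) ↔
      ¬ Term.hasVar y a ∧ ¬ Term.hasVar y c := by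
  constructor
  · intro h
    exact ⟨h ⟨0, Nat.zero_lt_two⟩, h ⟨1, Nat.one_lt_two⟩⟩
  · rintro ⟨h1, h2⟩ i
    by_cases hh : (i : ℕ) = 0 <;> simp [duo, hh] <;> assumption

@[simp] theorem exists_hasVar_duo' (y : ℕ) (a c : Term) :
    (∃ i : Fin PredSym.eq.arity, Term.hasVar y (duo a c i)) ↔
      Term.hasVar y a ∨ Term.hasVar y c := by
  constructor
  · rintro ⟨i, hi⟩
    by_cases hh : (i : ℕ) = 0
    · left; simpa [duo, hh] using hi
    · right; simpa [duo, hh] using hi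
  · rintro (h | h)
    exacts [⟨⟨0, Nat.zero_lt_two⟩, h⟩, ⟨⟨1, Nat.one_lt_two⟩, h⟩]

theorem trueIn_negF (F : Fml) : ∀ (St : Struc) (e : ℕ → St.D),
    (F.negF).trueIn St e ↔ ¬ F.trueIn St e := by
  induction F with
  | tt => intro St e; simp [Fml.negF, Fml.trueIn]
  | ff => intro St e; simp [Fml.negF, Fml.trueIn]
  | atom b p a => intro St e; cases b <;> simp [Fml.negF, Fml.trueIn] <;> tauto
  | and A B ihA ihB => intro St e; simp [Fml.negF, Fml.trueIn, ihA, ihB]; tauto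
  | or A B ihA ihB => intro St e; simp [Fml.negF, Fml.trueIn, ihA, ihB]
  | cand A B ihA ihB => intro St e; simp [Fml.negF, Fml.trueIn, ihA, ihB]; tauto
  | cor A B ihA ihB => intro St e; simp [Fml.negF, Fml.trueIn, ihA, ihB]
  | all x A ih => intro St e; simp [Fml.negF, Fml.trueIn, ih]
  | ex x A ih => intro St e; simp [Fml.negF, Fml.trueIn, ih]
  | call x A ih => intro St e; simp [Fml.negF, Fml.trueIn, ih]
  | cex x A ih => intro St e; simp [Fml.negF, Fml.trueIn, ih]

theorem stable_of_imp {E : Fml} {rest : List Fml} {F : Fml}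
    (h : ∀ (St : Struc) (e : ℕ → St.D),
      (bigAnd E.elz (rest.map Fml.elz)).trueIn St e → (F.elz).trueIn St e) :
    (Sequent.mk (E :: rest) F).stable := by
  intro St e
  show ((bigAnd E.elz (rest.map Fml.elz)).imp F.elz).trueIn St e
  by_cases hX : (bigAnd E.elz (rest.map Fml.elz)).trueIn St e
  · exact Or.inr (h St e hX)
  · exact Or.inl ((trueIn_negF _ St e).2 hX)

theorem stab_eq00 : (Sequent.mk [] (fEq t0 t0)).stable := by
  intro St e
  simp [Sequent.elz, Fml.elz, Fml.trueIn, Term.evalS, fEq, t0]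

theorem stab_eqSS : (Sequent.mk [] (fEq (tS (tv 2)) (tS (tv 2)))).stable := by
  intro St e
  simp [Sequent.elz, Fml.elz, Fml.trueIn, Term.evalS, fEq, tS, tv]

theorem stab_ne_S0 : (Sequent.mk [A1] (fNeq (tS (tv 0)) t0)).stable := by
  refine stable_of_imp fun St e h => ?_
  simp [bigAnd, Fml.elz, Fml.trueIn, Term.evalS, fEq, fNeq, tv, t0, tS, A1] at h ⊢
  exact fun hc => h (e 0) hc.symm

theorem stab_W1 : (Sequent.mk [fEq (tv 2) (tv 3)] (fEq (tv 2) (tv 3))).stable := by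
  refine stable_of_imp fun St e h => ?_
  simpa [bigAnd] using h

theorem stab_W2 : (Sequent.mk [fNeq (tv 2) (tv 3)] (fNeq (tv 2) (tv 3))).stable := by
  refine stable_of_imp fun St e h => ?_
  simpa [bigAnd] using h

theorem stab_U3 :
    (Sequent.mk [.cor (fEq (tv 2) (tv 3)) (fNeq (tv 2) (tv 3))]
      (.cor (fEq (tv 2) (tv 3)) (fNeq (tv 2) (tv 3)))).stable := by
  refine stable_of_imp fun St e h => ?_
  simp [bigAnd, Fml.elz, Fml.trueIn] at h

theorem stab_U0b :
    (Sequent.mk [Hfml] (.call 1 (.cor (fEq (tv 2) (tv 1)) (fNeq (tv 2) (tv 1))))).stable := by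
  refine stable_of_imp fun St e h => ?_
  simp [Fml.elz, Fml.trueIn]

theorem stab_U0 : (Sequent.mk [Hfml] goalFml).stable := by
  refine stable_of_imp fun St e h => ?_
  simp [goalFml, Fml.elz, Fml.trueIn]

/-- The succedent of the main inductive-step CL12 proof. -/
def succG : Fml := .cor (fEq (tv 4) (tS (tv 1))) (fNeq (tv 4) (tS (tv 1)))

theorem stab_S :
    (Sequent.mk [F1, PredF, A1, A2]
      (.call 0 (.cor (fEq (tv 0) (tS (tv 1))) (fNeq (tv 0) (tS (tv 1)))))).stable := by
  refine stable_of_imp fun St e h => ?_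
  simp [Fml.elz, Fml.trueIn]

theorem stab_T2 :
    (Sequent.mk [F1, .cex 3 (.cor (fEq (tv 4) t0) (fEq (tv 4) (tS (tv 3)))), A1, A2]
      succG).stable := by
  refine stable_of_imp fun St e h => ?_
  simp [bigAnd, Fml.elz, Fml.trueIn] at h

theorem stab_T3 :
    (Sequent.mk [F1, .cor (fEq (tv 4) t0) (fEq (tv 4) (tS (tv 5))), A1, A2] succG).stable := by
  refine stable_of_imp fun St e h => ?_
  simp [bigAnd, Fml.elz, Fml.trueIn] at h

theorem stab_T5b :
    (Sequent.mk [.cor (fEq (tv 5) (tv 1)) (fNeq (tv 5) (tv 1)), fEq (tv 4) (tS (tv 5)), A1, A2]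
      succG).stable := by
  refine stable_of_imp fun St e h => ?_
  simp [bigAnd, Fml.elz, Fml.trueIn] at h

theorem stab_T5a :
    (Sequent.mk [F1, fEq (tv 4) t0, A1, A2] (fNeq (tv 4) (tS (tv 1)))).stable := by
  refine stable_of_imp fun St e h => ?_
  simp [bigAnd, Fml.elz, Fml.trueIn, Term.evalS, fEq, fNeq, tv, t0, tS, A1, A2, F1, corEq01,
    Fml.imp, Fml.negF] at h ⊢
  obtain ⟨h40, hA1, -⟩ := h
  intro hc
  exact hA1 (e 1) (h40 ▸ hc)

theorem stab_T7a :
    (Sequent.mk [fEq (tv 5) (tv 1), fEq (tv 4) (tS (tv 5)), A1, A2]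
      (fEq (tv 4) (tS (tv 1)))).stable := by
  refine stable_of_imp fun St e h => ?_
  simp [bigAnd, Fml.elz, Fml.trueIn, Term.evalS, fEq, fNeq, tv, t0, tS, A1, A2,
    Fml.imp, Fml.negF] at h ⊢
  obtain ⟨h51, h45, -⟩ := h
  rw [h45]
  exact congrArg _ (funext fun _ => h51)

theorem stab_T7b :
    (Sequent.mk [fNeq (tv 5) (tv 1), fEq (tv 4) (tS (tv 5)), A1, A2]
      (fNeq (tv 4) (tS (tv 1)))).stable := by
  refine stable_of_imp fun St e h => ?_
  simp [bigAnd, Fml.elz, Fml.trueIn, Term.evalS, fEq, fNeq, tv, t0, tS, A1, A2,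
    Fml.imp, Fml.negF] at h ⊢
  obtain ⟨h51, h45, -, hA2⟩ := h
  intro hc
  rcases hA2 (e 5) (e 1) with h | h
  · exact h (h45.symm.trans hc)
  · exact h51 h

end Proof19

section Proof19b

/-! ### Generic head-mismatch lemmas for Wait conditions -/

theorem not_fill_cand {F : Fml}
    (hF : F.elementary ∨ (∃ p q, F = Fml.cor p q) ∨ ∃ x A, F = Fml.call x A)
    (C : FCtx) (H0 H1 : Fml) : F ≠ C.fill (.cand H0 H1) := by
  rcases hF with h | ⟨p, q, rfl⟩ | ⟨x, A, rfl⟩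
  · exact elem_ne_fill h cand_not_elem C
  · exact cor_ne_fill (fun _ _ => by simp) C
  · exact call_ne_fill (fun _ _ => by simp) C

theorem not_fill_call {F : Fml}
    (hF : F.elementary ∨ (∃ p q, F = Fml.cor p q) ∨ ∃ x A, F = Fml.cex x A)
    (C : FCtx) (x : ℕ) (H : Fml) : F ≠ C.fill (.call x H) := by
  rcases hF with h | ⟨p, q, rfl⟩ | ⟨y, A, rfl⟩
  · exact elem_ne_fill h call_not_elem C
  · exact cor_ne_fill (fun _ _ => by simp) C
  · exact cex_ne_fill (fun _ _ => by simp) C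

theorem not_fill_cor {F : Fml}
    (hF : F.elementary ∨ (∃ x A, F = Fml.call x A) ∨ ∃ x A, F = Fml.cex x A)
    (C : FCtx) (H0 H1 : Fml) : F ≠ C.fill (.cor H0 H1) := by
  rcases hF with h | ⟨y, A, rfl⟩ | ⟨y, A, rfl⟩
  · exact elem_ne_fill h cor_not_elem C
  · exact call_ne_fill (fun _ _ => by simp) C
  · exact cex_ne_fill (fun _ _ => by simp) C

theorem not_fill_cex {F : Fml}
    (hF : F.elementary ∨ (∃ x A, F = Fml.call x A) ∨ ∃ p q, F = Fml.cor p q)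
    (C : FCtx) (x : ℕ) (H : Fml) : F ≠ C.fill (.cex x H) := by
  rcases hF with h | ⟨y, A, rfl⟩ | ⟨p, q, rfl⟩
  · exact elem_ne_fill h cex_not_elem C
  · exact call_ne_fill (fun _ _ => by simp) C
  · exact cor_ne_fill (fun _ _ => by simp) C

/-- A Wait step in which all antecedent formulas and the succedent are "inert":
no genuine conditions arise. -/
theorem wait_inert {P : Set Sequent} {Y : Sequent} (hstab : Y.stable)
    (hante : ∀ E ∈ Y.ante, E.elementary ∨ ∃ x A, E = Fml.call x A)
    (hsucc : Y.succ.elementary ∨ ∃ p q, Y.succ = Fml.cor p q) : WaitStep P Y := by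
  refine ⟨hstab, ?_, ?_, ?_, ?_⟩
  · intro C H0 H1 h
    exact absurd h (not_fill_cand (hsucc.imp id Or.inl) C H0 H1)
  · intro G K C H0 H1 h
    have hm : C.fill (.cor H0 H1) ∈ Y.ante :=
      h ▸ List.mem_append_right G (List.mem_cons_self)
    rcases hante _ hm with he | ⟨x, A, hA⟩
    · exact absurd (fill_elem he) cor_not_elem
    · obtain ⟨-, h2⟩ := fill_inv_call hA
      simp at h2
  · intro C x H h
    exact absurd h (not_fill_call (hsucc.imp id Or.inl) C x H)
  · intro G K C x H h
    have hm : C.fill (.cex x H) ∈ Y.ante :=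
      h ▸ List.mem_append_right G (List.mem_cons_self)
    rcases hante _ hm with he | ⟨y, A, hA⟩
    · exact absurd (fill_elem he) cex_not_elem
    · obtain ⟨-, h2⟩ := fill_inv_call hA
      simp at h2

theorem F1_inert : F1.elementary ∨ ∃ x A, F1 = Fml.call x A := Or.inr ⟨_, _, rfl⟩
theorem atom_inert (b p a) :
    (Fml.atom b p a).elementary ∨ ∃ x A, Fml.atom b p a = Fml.call x A := Or.inl (by trivial)

/-! ### The sequents of the main inductive-step CL12 proof -/

def Pred4 : Fml := .cex 3 (.cor (fEq (tv 4) t0) (fEq (tv 4) (tS (tv 3))))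
def Df : Fml := .cor (fEq (tv 4) t0) (fEq (tv 4) (tS (tv 5)))
def CCf : Fml := .cor (fEq (tv 5) (tv 1)) (fNeq (tv 5) (tv 1))

def sT7a : Sequent := ⟨[fEq (tv 5) (tv 1), fEq (tv 4) (tS (tv 5)), A1, A2], fEq (tv 4) (tS (tv 1))⟩
def sT6a : Sequent := ⟨[fEq (tv 5) (tv 1), fEq (tv 4) (tS (tv 5)), A1, A2], succG⟩
def sT7b : Sequent := ⟨[fNeq (tv 5) (tv 1), fEq (tv 4) (tS (tv 5)), A1, A2], fNeq (tv 4) (tS (tv 1))⟩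
def sT6b : Sequent := ⟨[fNeq (tv 5) (tv 1), fEq (tv 4) (tS (tv 5)), A1, A2], succG⟩
def sT5b : Sequent := ⟨[CCf, fEq (tv 4) (tS (tv 5)), A1, A2], succG⟩
def sT4b : Sequent := ⟨[F1, fEq (tv 4) (tS (tv 5)), A1, A2], succG⟩
def sT5a : Sequent := ⟨[F1, fEq (tv 4) t0, A1, A2], fNeq (tv 4) (tS (tv 1))⟩
def sT4a : Sequent := ⟨[F1, fEq (tv 4) t0, A1, A2], succG⟩
def sT3 : Sequent := ⟨[F1, Df, A1, A2], succG⟩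
def sT2 : Sequent := ⟨[F1, Pred4, A1, A2], succG⟩
def sT1 : Sequent := ⟨[F1, PredF, A1, A2], succG⟩
def sS : Sequent :=
  ⟨[F1, PredF, A1, A2], .call 0 (.cor (fEq (tv 0) (tS (tv 1))) (fNeq (tv 0) (tS (tv 1))))⟩

def L5 : List Sequent := [sT7a, sT6a, sT7b, sT6b, sT5b, sT4b, sT5a, sT4a, sT3, sT2, sT1, sS]

theorem proofP5 : IsCL12Proof L5 sS := by
  refine ⟨by simp [L5], rfl, ?_⟩
  intro i h
  simp only [L5, List.length_cons, List.length_nil] at h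
  interval_cases i
  · show CL12Step _ sT7a
    refine Or.inr (wait_inert stab_T7a ?_ (Or.inl (by trivial)))
    intro E hE
    have hE' : E = fEq (tv 5) (tv 1) ∨ E = fEq (tv 4) (tS (tv 5)) ∨ E = A1 ∨ E = A2 := by
      simpa [sT7a] using hE
    rcases hE' with rfl | rfl | rfl | rfl
    exacts [Or.inl (by trivial), Or.inl (by trivial), Or.inl A1_elem, Or.inl A2_elem]
  -- 1 : sT6a by ⊔-Choose from sT7a
  · show CL12Step _ sT6a
    refine Or.inl ⟨sT7a, by simp [L5, List.take], ?_⟩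
    exact NonWaitStep.corChoose [fEq (tv 5) (tv 1), fEq (tv 4) (tS (tv 5)), A1, A2] .hole
      (fEq (tv 4) (tS (tv 1))) (fNeq (tv 4) (tS (tv 1))) false
  · show CL12Step _ sT7b
    refine Or.inr (wait_inert stab_T7b ?_ (Or.inl (by trivial)))
    intro E hE
    have hE' : E = fNeq (tv 5) (tv 1) ∨ E = fEq (tv 4) (tS (tv 5)) ∨ E = A1 ∨ E = A2 := by
      simpa [sT7b] using hE
    rcases hE' with rfl | rfl | rfl | rfl
    exacts [Or.inl (by trivial), Or.inl (by trivial), Or.inl A1_elem, Or.inl A2_elem]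
  -- 3 : sT6b by ⊔-Choose from sT7b
  · show CL12Step _ sT6b
    refine Or.inl ⟨sT7b, by simp [L5, List.take], ?_⟩
    exact NonWaitStep.corChoose [fNeq (tv 5) (tv 1), fEq (tv 4) (tS (tv 5)), A1, A2] .hole
      (fEq (tv 4) (tS (tv 1))) (fNeq (tv 4) (tS (tv 1))) true
  · show CL12Step _ sT5b
    refine Or.inr ⟨stab_T5b, ?_, ?_, ?_, ?_⟩
    · intro C H0 H1 h
      exact absurd h (not_fill_cand (Or.inr (Or.inl ⟨_, _, rfl⟩)) C H0 H1)
    · intro G K C H0 H1 h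
      rcases append_cons_eq_four h.symm with ⟨hG, hX, hK⟩ | ⟨hG, hX, hK⟩ | ⟨hG, hX, hK⟩ |
        ⟨hG, hX, hK⟩
      · obtain ⟨hC, h2⟩ := fill_inv_cor hX
        injection h2 with e0 e1
        subst hG hK hC e0 e1
        constructor
        · show sT6a ∈ _
          simp [L5, List.take]
        · show sT6b ∈ _
          simp [L5, List.take]
      · exact absurd hX.symm (not_fill_cor (Or.inl (by trivial)) C H0 H1)
      · exact absurd hX.symm (not_fill_cor (Or.inl A1_elem) C H0 H1)
      · exact absurd hX.symm (not_fill_cor (Or.inl A2_elem) C H0 H1)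
    · intro C x H h
      exact absurd h (not_fill_call (Or.inr (Or.inl ⟨_, _, rfl⟩)) C x H)
    · intro G K C x H h
      rcases append_cons_eq_four h.symm with ⟨hG, hX, hK⟩ | ⟨hG, hX, hK⟩ | ⟨hG, hX, hK⟩ |
        ⟨hG, hX, hK⟩
      · exact absurd hX.symm (not_fill_cex (Or.inr (Or.inr ⟨_, _, rfl⟩)) C x H)
      · exact absurd hX.symm (not_fill_cex (Or.inl (by trivial)) C x H)
      · exact absurd hX.symm (not_fill_cex (Or.inl A1_elem) C x H)
      · exact absurd hX.symm (not_fill_cex (Or.inl A2_elem) C x H)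
  -- 5 : sT4b by ⊓-Choose (callChoose on F1) from sT5b
  · show CL12Step _ sT4b
    have e : corEq01.subst 0 (tv 5) = CCf := by
      simp [corEq01, CCf, Fml.subst, fEq, fNeq]
    have tok : TermOk (tv 5) ⟨[] ++ (FCtx.hole.fill (corEq01.subst 0 (tv 5))) ::
        [fEq (tv 4) (tS (tv 5)), A1, A2], succG⟩ := by
      refine Or.inr ⟨5, rfl, ?_⟩
      simp [Sequent.bindsVar, corEq01, Fml.subst, Fml.bindsVar, succG, A1, A2, Fml.imp,
        Fml.negF, fEq, fNeq, FCtx.fill]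
    have st := NonWaitStep.callChoose [] [fEq (tv 4) (tS (tv 5)), A1, A2] .hole 0 corEq01
      (tv 5) succG tok
    rw [show FCtx.hole.fill (corEq01.subst 0 (tv 5)) = CCf from e] at st
    exact Or.inl ⟨sT5b, by simp [L5, List.take], st⟩
  · show CL12Step _ sT5a
    refine Or.inr (wait_inert stab_T5a ?_ (Or.inl (by trivial)))
    intro E hE
    have hE' : E = F1 ∨ E = fEq (tv 4) t0 ∨ E = A1 ∨ E = A2 := by
      simpa [sT5a] using hE
    rcases hE' with rfl | rfl | rfl | rfl
    exacts [F1_inert, Or.inl (by trivial), Or.inl A1_elem, Or.inl A2_elem]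
  -- 7 : sT4a by ⊔-Choose from sT5a
  · show CL12Step _ sT4a
    refine Or.inl ⟨sT5a, by simp [L5, List.take], ?_⟩
    exact NonWaitStep.corChoose [F1, fEq (tv 4) t0, A1, A2] .hole
      (fEq (tv 4) (tS (tv 1))) (fNeq (tv 4) (tS (tv 1))) true
  · show CL12Step _ sT3
    refine Or.inr ⟨stab_T3, ?_, ?_, ?_, ?_⟩
    · intro C H0 H1 h
      exact absurd h (not_fill_cand (Or.inr (Or.inl ⟨_, _, rfl⟩)) C H0 H1)
    · intro G K C H0 H1 h
      rcases append_cons_eq_four h.symm with ⟨hG, hX, hK⟩ | ⟨hG, hX, hK⟩ | ⟨hG, hX, hK⟩ |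
        ⟨hG, hX, hK⟩
      · exact absurd hX.symm (not_fill_cor (Or.inr (Or.inl ⟨_, _, rfl⟩)) C H0 H1)
      · obtain ⟨hC, h2⟩ := fill_inv_cor hX
        injection h2 with e0 e1
        subst hG hK hC e0 e1
        constructor
        · show sT4a ∈ _
          simp [L5, List.take]
        · show sT4b ∈ _
          simp [L5, List.take]
      · exact absurd hX.symm (not_fill_cor (Or.inl A1_elem) C H0 H1)
      · exact absurd hX.symm (not_fill_cor (Or.inl A2_elem) C H0 H1)
    · intro C x H h
      exact absurd h (not_fill_call (Or.inr (Or.inl ⟨_, _, rfl⟩)) C x H)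
    · intro G K C x H h
      rcases append_cons_eq_four h.symm with ⟨hG, hX, hK⟩ | ⟨hG, hX, hK⟩ | ⟨hG, hX, hK⟩ |
        ⟨hG, hX, hK⟩
      · exact absurd hX.symm (not_fill_cex (Or.inr (Or.inl ⟨_, _, rfl⟩)) C x H)
      · exact absurd hX.symm (not_fill_cex (Or.inr (Or.inr ⟨_, _, rfl⟩)) C x H)
      · exact absurd hX.symm (not_fill_cex (Or.inl A1_elem) C x H)
      · exact absurd hX.symm (not_fill_cex (Or.inl A2_elem) C x H)
  · show CL12Step _ sT2
    refine Or.inr ⟨stab_T2, ?_, ?_, ?_, ?_⟩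
    · intro C H0 H1 h
      exact absurd h (not_fill_cand (Or.inr (Or.inl ⟨_, _, rfl⟩)) C H0 H1)
    · intro G K C H0 H1 h
      rcases append_cons_eq_four h.symm with ⟨hG, hX, hK⟩ | ⟨hG, hX, hK⟩ | ⟨hG, hX, hK⟩ |
        ⟨hG, hX, hK⟩
      · exact absurd hX.symm (not_fill_cor (Or.inr (Or.inl ⟨_, _, rfl⟩)) C H0 H1)
      · exact absurd hX.symm (not_fill_cor (Or.inr (Or.inr ⟨_, _, rfl⟩)) C H0 H1)
      · exact absurd hX.symm (not_fill_cor (Or.inl A1_elem) C H0 H1)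
      · exact absurd hX.symm (not_fill_cor (Or.inl A2_elem) C H0 H1)
    · intro C x H h
      exact absurd h (not_fill_call (Or.inr (Or.inl ⟨_, _, rfl⟩)) C x H)
    · intro G K C x H h
      rcases append_cons_eq_four h.symm with ⟨hG, hX, hK⟩ | ⟨hG, hX, hK⟩ | ⟨hG, hX, hK⟩ |
        ⟨hG, hX, hK⟩
      · exact absurd hX.symm (not_fill_cex (Or.inr (Or.inl ⟨_, _, rfl⟩)) C x H)
      · obtain ⟨hC, h2⟩ := fill_inv_cex hX
        injection h2 with e0 e1
        subst hG hK hC e0 e1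
        refine ⟨5, ?_, ?_⟩
        · simp [Sequent.mentionsVar, sT2, F1, Pred4, corEq01, A1, A2, succG, Fml.imp,
            Fml.negF, Fml.mentionsVar, fEq, fNeq]
        · have e : (Sequent.mk ([F1] ++ FCtx.hole.fill ((Fml.cor (fEq (tv 4) t0)
              (fEq (tv 4) (tS (tv 3)))).subst 3 (tv 5)) :: [A1, A2]) sT2.succ) = sT3 := by
            simp [sT3, sT2, Df, succG, Fml.subst, FCtx.fill, fEq, fNeq]
          exact Set.mem_of_eq_of_mem e (by simp [L5, List.take])
      · exact absurd hX.symm (not_fill_cex (Or.inl A1_elem) C x H)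
      · exact absurd hX.symm (not_fill_cex (Or.inl A2_elem) C x H)
  -- 10 : sT1 by ⊓-Choose (callChoose on PredF) from sT2
  · show CL12Step _ sT1
    have e : FP.subst 2 (tv 4) = Pred4 := by
      simp [FP, Pred4, Fml.subst, fEq, fNeq]
    have tok : TermOk (tv 4) ⟨[F1] ++ (FCtx.hole.fill (FP.subst 2 (tv 4))) :: [A1, A2],
        succG⟩ := by
      refine Or.inr ⟨4, rfl, ?_⟩
      simp [Sequent.bindsVar, F1, corEq01, FP, Fml.subst, Fml.bindsVar, succG, A1, A2,
        Fml.imp, Fml.negF, fEq, fNeq, FCtx.fill]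
    have st := NonWaitStep.callChoose [F1] [A1, A2] .hole 2 FP (tv 4) succG tok
    rw [show FCtx.hole.fill (FP.subst 2 (tv 4)) = Pred4 from e] at st
    exact Or.inl ⟨sT2, by simp [L5, List.take], st⟩
  · show CL12Step _ sS
    refine Or.inr ⟨stab_S, ?_, ?_, ?_, ?_⟩
    · intro C H0 H1 h
      exact absurd h (not_fill_cand (Or.inr (Or.inr ⟨_, _, rfl⟩)) C H0 H1)
    · intro G K C H0 H1 h
      rcases append_cons_eq_four h.symm with ⟨hG, hX, hK⟩ | ⟨hG, hX, hK⟩ | ⟨hG, hX, hK⟩ |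
        ⟨hG, hX, hK⟩
      · exact absurd hX.symm (not_fill_cor (Or.inr (Or.inl ⟨_, _, rfl⟩)) C H0 H1)
      · exact absurd hX.symm (not_fill_cor (Or.inr (Or.inl ⟨_, _, rfl⟩)) C H0 H1)
      · exact absurd hX.symm (not_fill_cor (Or.inl A1_elem) C H0 H1)
      · exact absurd hX.symm (not_fill_cor (Or.inl A2_elem) C H0 H1)
    · intro C x H h
      obtain ⟨hC, h2⟩ := fill_inv_call h.symm
      injection h2 with e0 e1
      subst hC e0 e1
      refine ⟨4, ?_, ?_⟩
      · simp [Sequent.mentionsVar, sS, F1, PredF, FP, corEq01, A1, A2, Fml.imp,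
          Fml.negF, Fml.mentionsVar, fEq, fNeq]
      · have e : (Sequent.mk sS.ante (FCtx.hole.fill ((Fml.cor (fEq (tv 0) (tS (tv 1)))
            (fNeq (tv 0) (tS (tv 1)))).subst 0 (tv 4)))) = sT1 := by
          simp [sS, sT1, succG, Fml.subst, FCtx.fill, fEq, fNeq]
        exact Set.mem_of_eq_of_mem e (by simp [L5, List.take])
    · intro G K C x H h
      rcases append_cons_eq_four h.symm with ⟨hG, hX, hK⟩ | ⟨hG, hX, hK⟩ | ⟨hG, hX, hK⟩ |
        ⟨hG, hX, hK⟩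
      · exact absurd hX.symm (not_fill_cex (Or.inr (Or.inl ⟨_, _, rfl⟩)) C x H)
      · exact absurd hX.symm (not_fill_cex (Or.inr (Or.inl ⟨_, _, rfl⟩)) C x H)
      · exact absurd hX.symm (not_fill_cex (Or.inl A1_elem) C x H)
      · exact absurd hX.symm (not_fill_cex (Or.inl A2_elem) C x H)

end Proof19b

section Proof19c

/-! ### The small CL12 proofs -/

def F0' : Fml := .cor (fEq (tv 0) t0) (fNeq (tv 0) t0)

theorem no_ante_inert : ∀ E ∈ ([] : List Fml), E.elementary ∨ ∃ x A, E = Fml.call x A :=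
  fun E hE => absurd hE (List.not_mem_nil (a := E))

def L1 : List Sequent := [⟨[], fEq t0 t0⟩, ⟨[], .cor (fEq t0 t0) (fNeq t0 t0)⟩]

theorem proofP1 : IsCL12Proof L1 ⟨[], .cor (fEq t0 t0) (fNeq t0 t0)⟩ := by
  refine ⟨by simp [L1], rfl, ?_⟩
  intro i h
  simp only [L1, List.length_cons, List.length_nil] at h
  interval_cases i
  · show CL12Step _ (⟨[], fEq t0 t0⟩ : Sequent)
    exact Or.inr (wait_inert stab_eq00 no_ante_inert (Or.inl (by trivial)))
  · show CL12Step _ (⟨[], .cor (fEq t0 t0) (fNeq t0 t0)⟩ : Sequent)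
    refine Or.inl ⟨⟨[], fEq t0 t0⟩, by simp [L1, List.take], ?_⟩
    exact NonWaitStep.corChoose [] .hole (fEq t0 t0) (fNeq t0 t0) false

def L2 : List Sequent :=
  [⟨[A1], fNeq (tS (tv 0)) t0⟩, ⟨[A1], .cor (fEq (tS (tv 0)) t0) (fNeq (tS (tv 0)) t0)⟩]

theorem proofP2 : IsCL12Proof L2 ⟨[A1], .cor (fEq (tS (tv 0)) t0) (fNeq (tS (tv 0)) t0)⟩ := by
  refine ⟨by simp [L2], rfl, ?_⟩
  intro i h
  simp only [L2, List.length_cons, List.length_nil] at h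
  interval_cases i
  · show CL12Step _ (⟨[A1], fNeq (tS (tv 0)) t0⟩ : Sequent)
    refine Or.inr (wait_inert stab_ne_S0 ?_ (Or.inl (by trivial)))
    intro E hE
    have hE' : E = A1 := by simpa using hE
    rw [hE']
    exact Or.inl A1_elem
  · show CL12Step _ (⟨[A1], .cor (fEq (tS (tv 0)) t0) (fNeq (tS (tv 0)) t0)⟩ : Sequent)
    refine Or.inl ⟨⟨[A1], fNeq (tS (tv 0)) t0⟩, by simp [L2, List.take], ?_⟩
    exact NonWaitStep.corChoose [A1] .hole (fEq (tS (tv 0)) t0) (fNeq (tS (tv 0)) t0) true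

def L3 : List Sequent :=
  [⟨[], fEq t0 t0⟩, ⟨[], .cor (fEq t0 t0) (fEq t0 (tS t0))⟩,
   ⟨[], .cex 3 (.cor (fEq t0 t0) (fEq t0 (tS (tv 3))))⟩]

theorem proofP3 : IsCL12Proof L3 ⟨[], .cex 3 (.cor (fEq t0 t0) (fEq t0 (tS (tv 3))))⟩ := by
  refine ⟨by simp [L3], rfl, ?_⟩
  intro i h
  simp only [L3, List.length_cons, List.length_nil] at h
  interval_cases i
  · show CL12Step _ (⟨[], fEq t0 t0⟩ : Sequent)
    exact Or.inr (wait_inert stab_eq00 no_ante_inert (Or.inl (by trivial)))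
  · show CL12Step _ (⟨[], .cor (fEq t0 t0) (fEq t0 (tS t0))⟩ : Sequent)
    refine Or.inl ⟨⟨[], fEq t0 t0⟩, by simp [L3, List.take], ?_⟩
    exact NonWaitStep.corChoose [] .hole (fEq t0 t0) (fEq t0 (tS t0)) false
  · show CL12Step _ (⟨[], .cex 3 (.cor (fEq t0 t0) (fEq t0 (tS (tv 3))))⟩ : Sequent)
    have e : (Fml.cor (fEq t0 t0) (fEq t0 (tS (tv 3)))).subst 3 t0
        = Fml.cor (fEq t0 t0) (fEq t0 (tS t0)) := by
      simp [Fml.subst, fEq, fNeq]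
    have st := NonWaitStep.cexChoose [] .hole 3 (.cor (fEq t0 t0) (fEq t0 (tS (tv 3)))) t0
      (Or.inl ⟨0, rfl⟩)
    rw [show FCtx.hole.fill ((Fml.cor (fEq t0 t0) (fEq t0 (tS (tv 3)))).subst 3 t0)
      = Fml.cor (fEq t0 t0) (fEq t0 (tS t0)) from e] at st
    exact Or.inl ⟨⟨[], .cor (fEq t0 t0) (fEq t0 (tS t0))⟩, by simp [L3, List.take], st⟩

def L4 : List Sequent :=
  [⟨[], fEq (tS (tv 2)) (tS (tv 2))⟩,
   ⟨[], .cor (fEq (tS (tv 2)) t0) (fEq (tS (tv 2)) (tS (tv 2)))⟩,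
   ⟨[], .cex 3 (.cor (fEq (tS (tv 2)) t0) (fEq (tS (tv 2)) (tS (tv 3))))⟩]

theorem proofP4 :
    IsCL12Proof L4 ⟨[], .cex 3 (.cor (fEq (tS (tv 2)) t0) (fEq (tS (tv 2)) (tS (tv 3))))⟩ := by
  refine ⟨by simp [L4], rfl, ?_⟩
  intro i h
  simp only [L4, List.length_cons, List.length_nil] at h
  interval_cases i
  · show CL12Step _ (⟨[], fEq (tS (tv 2)) (tS (tv 2))⟩ : Sequent)
    exact Or.inr (wait_inert stab_eqSS no_ante_inert (Or.inl (by trivial)))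
  · show CL12Step _ (⟨[], .cor (fEq (tS (tv 2)) t0) (fEq (tS (tv 2)) (tS (tv 2)))⟩ : Sequent)
    refine Or.inl ⟨⟨[], fEq (tS (tv 2)) (tS (tv 2))⟩, by simp [L4, List.take], ?_⟩
    exact NonWaitStep.corChoose [] .hole (fEq (tS (tv 2)) t0) (fEq (tS (tv 2)) (tS (tv 2))) true
  · show CL12Step _
      (⟨[], .cex 3 (.cor (fEq (tS (tv 2)) t0) (fEq (tS (tv 2)) (tS (tv 3))))⟩ : Sequent)
    have e : (Fml.cor (fEq (tS (tv 2)) t0) (fEq (tS (tv 2)) (tS (tv 3)))).subst 3 (tv 2)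
        = Fml.cor (fEq (tS (tv 2)) t0) (fEq (tS (tv 2)) (tS (tv 2))) := by
      simp [Fml.subst, fEq, fNeq]
    have tok : TermOk (tv 2) ⟨[], FCtx.hole.fill ((Fml.cor (fEq (tS (tv 2)) t0)
        (fEq (tS (tv 2)) (tS (tv 3)))).subst 3 (tv 2))⟩ := by
      refine Or.inr ⟨2, rfl, ?_⟩
      simp [Sequent.bindsVar, Fml.subst, Fml.bindsVar, fEq, fNeq, FCtx.fill]
    have st := NonWaitStep.cexChoose [] .hole 3
      (.cor (fEq (tS (tv 2)) t0) (fEq (tS (tv 2)) (tS (tv 3)))) (tv 2) tok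
    rw [show FCtx.hole.fill ((Fml.cor (fEq (tS (tv 2)) t0)
        (fEq (tS (tv 2)) (tS (tv 3)))).subst 3 (tv 2))
      = Fml.cor (fEq (tS (tv 2)) t0) (fEq (tS (tv 2)) (tS (tv 2))) from e] at st
    exact Or.inl ⟨⟨[], .cor (fEq (tS (tv 2)) t0) (fEq (tS (tv 2)) (tS (tv 2)))⟩,
      by simp [L4, List.take], st⟩

/-! ### The quantifier-swap CL12 proof -/

def corEq23 : Fml := .cor (fEq (tv 2) (tv 3)) (fNeq (tv 2) (tv 3))
def F1v3 : Fml := .call 0 (.cor (fEq (tv 0) (tv 3)) (fNeq (tv 0) (tv 3)))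
def corEq21 : Fml := .cor (fEq (tv 2) (tv 1)) (fNeq (tv 2) (tv 1))

def sU5a : Sequent := ⟨[fEq (tv 2) (tv 3)], fEq (tv 2) (tv 3)⟩
def sU4a : Sequent := ⟨[fEq (tv 2) (tv 3)], corEq23⟩
def sU5b : Sequent := ⟨[fNeq (tv 2) (tv 3)], fNeq (tv 2) (tv 3)⟩
def sU4b : Sequent := ⟨[fNeq (tv 2) (tv 3)], corEq23⟩
def sU3 : Sequent := ⟨[corEq23], corEq23⟩
def sU2 : Sequent := ⟨[F1v3], corEq23⟩
def sU1 : Sequent := ⟨[Hfml], corEq23⟩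
def sU0b : Sequent := ⟨[Hfml], .call 1 corEq21⟩
def sU0 : Sequent := ⟨[Hfml], goalFml⟩

def L6 : List Sequent := [sU5a, sU4a, sU5b, sU4b, sU3, sU2, sU1, sU0b, sU0]

theorem proofP6 : IsCL12Proof L6 sU0 := by
  refine ⟨by simp [L6], rfl, ?_⟩
  intro i h
  simp only [L6, List.length_cons, List.length_nil] at h
  interval_cases i
  · show CL12Step _ sU5a
    refine Or.inr (wait_inert stab_W1 ?_ (Or.inl (by trivial)))
    intro E hE
    have hE' : E = fEq (tv 2) (tv 3) := by simpa [sU5a] using hE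
    rw [hE']
    exact Or.inl (by trivial)
  -- 1 : sU4a by ⊔-Choose
  · show CL12Step _ sU4a
    refine Or.inl ⟨sU5a, by simp [L6, List.take], ?_⟩
    exact NonWaitStep.corChoose [fEq (tv 2) (tv 3)] .hole (fEq (tv 2) (tv 3))
      (fNeq (tv 2) (tv 3)) false
  · show CL12Step _ sU5b
    refine Or.inr (wait_inert stab_W2 ?_ (Or.inl (by trivial)))
    intro E hE
    have hE' : E = fNeq (tv 2) (tv 3) := by simpa [sU5b] using hE
    rw [hE']
    exact Or.inl (by trivial)
  -- 3 : sU4b by ⊔-Choose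
  · show CL12Step _ sU4b
    refine Or.inl ⟨sU5b, by simp [L6, List.take], ?_⟩
    exact NonWaitStep.corChoose [fNeq (tv 2) (tv 3)] .hole (fEq (tv 2) (tv 3))
      (fNeq (tv 2) (tv 3)) true
  · show CL12Step _ sU3
    refine Or.inr ⟨stab_U3, ?_, ?_, ?_, ?_⟩
    · intro C H0 H1 h
      exact absurd h (not_fill_cand (Or.inr (Or.inl ⟨_, _, rfl⟩)) C H0 H1)
    · intro G K C H0 H1 h
      obtain ⟨hG, hX, hK⟩ := append_cons_eq_one h.symm
      obtain ⟨hC, h2⟩ := fill_inv_cor hX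
      injection h2 with e0 e1
      subst hG hK hC e0 e1
      constructor
      · show sU4a ∈ _
        simp [L6, List.take]
      · show sU4b ∈ _
        simp [L6, List.take]
    · intro C x H h
      exact absurd h (not_fill_call (Or.inr (Or.inl ⟨_, _, rfl⟩)) C x H)
    · intro G K C x H h
      obtain ⟨hG, hX, hK⟩ := append_cons_eq_one h.symm
      exact absurd hX.symm (not_fill_cex (Or.inr (Or.inr ⟨_, _, rfl⟩)) C x H)
  -- 5 : sU2 by ⊓-Choose from sU3
  · show CL12Step _ sU2
    have e : (Fml.cor (fEq (tv 0) (tv 3)) (fNeq (tv 0) (tv 3))).subst 0 (tv 2) = corEq23 := by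
      simp [corEq23, Fml.subst, fEq, fNeq]
    have tok : TermOk (tv 2) ⟨[] ++ (FCtx.hole.fill ((Fml.cor (fEq (tv 0) (tv 3))
        (fNeq (tv 0) (tv 3))).subst 0 (tv 2))) :: [], corEq23⟩ := by
      refine Or.inr ⟨2, rfl, ?_⟩
      simp [Sequent.bindsVar, Fml.subst, Fml.bindsVar, corEq23, fEq, fNeq, FCtx.fill]
    have st := NonWaitStep.callChoose [] [] .hole 0
      (.cor (fEq (tv 0) (tv 3)) (fNeq (tv 0) (tv 3))) (tv 2) corEq23 tok
    rw [show FCtx.hole.fill ((Fml.cor (fEq (tv 0) (tv 3)) (fNeq (tv 0) (tv 3))).subst 0 (tv 2))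
      = corEq23 from e] at st
    exact Or.inl ⟨sU3, by simp [L6, List.take], st⟩
  -- 6 : sU1 by ⊓-Choose from sU2
  · show CL12Step _ sU1
    have e : F1.subst 1 (tv 3) = F1v3 := by
      simp [F1, F1v3, corEq01, Fml.subst, fEq, fNeq]
    have tok : TermOk (tv 3) ⟨[] ++ (FCtx.hole.fill (F1.subst 1 (tv 3))) :: [], corEq23⟩ := by
      refine Or.inr ⟨3, rfl, ?_⟩
      simp [Sequent.bindsVar, F1, corEq01, Fml.subst, Fml.bindsVar, corEq23, fEq, fNeq,
        FCtx.fill]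
    have st := NonWaitStep.callChoose [] [] .hole 1 F1 (tv 3) corEq23 tok
    rw [show FCtx.hole.fill (F1.subst 1 (tv 3)) = F1v3 from e] at st
    exact Or.inl ⟨sU2, by simp [L6, List.take], st⟩
  · show CL12Step _ sU0b
    refine Or.inr ⟨stab_U0b, ?_, ?_, ?_, ?_⟩
    · intro C H0 H1 h
      exact absurd h (not_fill_cand (Or.inr (Or.inr ⟨_, _, rfl⟩)) C H0 H1)
    · intro G K C H0 H1 h
      obtain ⟨hG, hX, hK⟩ := append_cons_eq_one h.symm
      exact absurd hX.symm (not_fill_cor (Or.inr (Or.inl ⟨_, _, rfl⟩)) C H0 H1)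
    · intro C x H h
      obtain ⟨hC, h2⟩ := fill_inv_call h.symm
      injection h2 with e0 e1
      subst hC e0 e1
      refine ⟨3, ?_, ?_⟩
      · simp [Sequent.mentionsVar, sU0b, Hfml, F1, corEq01, corEq21, Fml.mentionsVar,
          fEq, fNeq]
      · have e : (Sequent.mk sU0b.ante (FCtx.hole.fill (corEq21.subst 1 (tv 3)))) = sU1 := by
          simp [sU0b, sU1, corEq21, corEq23, Fml.subst, FCtx.fill, fEq, fNeq]
        exact Set.mem_of_eq_of_mem e (by simp [L6, List.take])
    · intro G K C x H h
      obtain ⟨hG, hX, hK⟩ := append_cons_eq_one h.symm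
      exact absurd hX.symm (not_fill_cex (Or.inr (Or.inl ⟨_, _, rfl⟩)) C x H)
  · show CL12Step _ sU0
    refine Or.inr ⟨stab_U0, ?_, ?_, ?_, ?_⟩
    · intro C H0 H1 h
      exact absurd h (not_fill_cand (Or.inr (Or.inr ⟨_, _, rfl⟩)) C H0 H1)
    · intro G K C H0 H1 h
      obtain ⟨hG, hX, hK⟩ := append_cons_eq_one h.symm
      exact absurd hX.symm (not_fill_cor (Or.inr (Or.inl ⟨_, _, rfl⟩)) C H0 H1)
    · intro C x H h
      obtain ⟨hC, h2⟩ := fill_inv_call ((show sU0.succ = Fml.call 0 (.call 1 corEq01) from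
        rfl) ▸ h).symm
      injection h2 with e0 e1
      subst hC e0 e1
      refine ⟨2, ?_, ?_⟩
      · simp [Sequent.mentionsVar, sU0, Hfml, goalFml, F1, corEq01, Fml.mentionsVar,
          fEq, fNeq]
      · have e : (Sequent.mk sU0.ante (FCtx.hole.fill ((Fml.call 1 corEq01).subst 0 (tv 2))))
            = sU0b := by
          simp [sU0, sU0b, corEq01, corEq21, Fml.subst, FCtx.fill, fEq, fNeq]
        exact Set.mem_of_eq_of_mem e (by simp [L6, List.take])
    · intro G K C x H h
      obtain ⟨hG, hX, hK⟩ := append_cons_eq_one h.symm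
      exact absurd hX.symm (not_fill_cex (Or.inr (Or.inl ⟨_, _, rfl⟩)) C x H)

end Proof19c

section Proof19d

/-! ### Assembling the CLA1 deduction -/

theorem E1 : F1.subst 1 t0 = Fml.call 0 F0' := by
  simp [F1, F0', corEq01, Fml.subst, fEq, fNeq]

theorem E2 : F1.subst 1 (tS (tv 1))
    = Fml.call 0 (.cor (fEq (tv 0) (tS (tv 1))) (fNeq (tv 0) (tS (tv 1)))) := by
  simp [F1, corEq01, Fml.subst, fEq, fNeq]

theorem E3 : F0'.subst 0 t0 = Fml.cor (fEq t0 t0) (fNeq t0 t0) := by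
  simp [F0', Fml.subst, fEq, fNeq]

theorem E4 : F0'.subst 0 (tS (tv 0))
    = Fml.cor (fEq (tS (tv 0)) t0) (fNeq (tS (tv 0)) t0) := by
  simp [F0', Fml.subst, fEq, fNeq]

theorem E5 : FP.subst 2 t0 = Fml.cex 3 (.cor (fEq t0 t0) (fEq t0 (tS (tv 3)))) := by
  simp [FP, Fml.subst, fEq, fNeq]

theorem E6 : FP.subst 2 (tS (tv 2))
    = Fml.cex 3 (.cor (fEq (tS (tv 2)) t0) (fEq (tS (tv 2)) (tS (tv 3)))) := by
  simp [FP, Fml.subst, fEq, fNeq]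

noncomputable def dedBB : CLADed CLA1Ax [] (Fml.cor (fEq t0 t0) (fNeq t0 t0)) :=
  .lc [] [] _ L1 proofP1 (fun G hG => absurd hG (List.not_mem_nil (a := G)))

noncomputable def dedBS :
    CLADed CLA1Ax [F0'] (Fml.cor (fEq (tS (tv 0)) t0) (fNeq (tS (tv 0)) t0)) :=
  .lc [F0'] [A1] _ L2 proofP2 (fun G hG => by
    have h : G = A1 := by simpa using hG
    rw [h]
    exact .axm _ _ (Or.inl .a1))

noncomputable def dedBase : CLADed CLA1Ax [] (Fml.call 0 F0') :=
  .ci [] F0' 0 (fun E hE => absurd hE (List.not_mem_nil (a := E)))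
    (by rw [E3]; exact dedBB)
    (by rw [E4]; exact dedBS)

noncomputable def dedPB : CLADed CLA1Ax [F1] (FP.subst 2 t0) := by
  rw [E5]
  exact .lc [F1] [] _ L3 proofP3 (fun G hG => absurd hG (List.not_mem_nil (a := G)))

noncomputable def dedPS : CLADed CLA1Ax (FP :: [F1]) (FP.subst 2 (tS (tv 2))) := by
  rw [E6]
  exact .lc (FP :: [F1]) [] _ L4 proofP4 (fun G hG => absurd hG (List.not_mem_nil (a := G)))

noncomputable def dedPred : CLADed CLA1Ax [F1] PredF :=
  .ci [F1] FP 2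
    (by
      intro E hE
      have h : E = F1 := by simpa using hE
      rw [h]
      simp [F1, corEq01, Fml.mentionsVar])
    dedPB dedPS

noncomputable def dedStep : CLADed CLA1Ax [F1] (F1.subst 1 (tS (tv 1))) := by
  rw [E2]
  refine .lc [F1] [F1, PredF, A1, A2] _ L5 proofP5 (fun G hG => ?_)
  by_cases h1 : G = F1
  · rw [h1]; exact .hyp _ _ (by simp)
  by_cases h2 : G = PredF
  · rw [h2]; exact dedPred
  by_cases h3 : G = A1
  · rw [h3]; exact .axm _ _ (Or.inl .a1)
  by_cases h4 : G = A2
  · rw [h4]; exact .axm _ _ (Or.inl .a2)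
  exact absurd hG (by simp [h1, h2, h3, h4])

noncomputable def dedH : CLADed CLA1Ax [] Hfml :=
  .ci [] F1 1 (fun E hE => absurd hE (List.not_mem_nil (a := E)))
    (by rw [E1]; exact dedBase)
    dedStep

noncomputable def dedFinal : CLADed CLA1Ax [] goalFml :=
  .lc [] [Hfml] _ L6 proofP6 (fun G hG => by
    have h : G = Hfml := by simpa using hG
    rw [h]
    exact dedH)

theorem main_result :
    CLAProves CLA1Ax []
      (.call 0 (.call 1 (.cor (fEq (tv 0) (tv 1)) (fNeq (tv 0) (tv 1))))) :=
  ⟨dedFinal⟩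

end Proof19d

/-- CLA1 proves `⊓x⊓y (x = y ⊔ x ≠ y)`: the decidability of
equality of natural numbers. -/
theorem cla1_proves_eq_decidable :
    CLAProves CLA1Ax []
      (.call 0 (.call 1 (.cor (fEq (tv 0) (tv 1)) (fNeq (tv 0) (tv 1))))) := by
  exact main_result

end

end CoL
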